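/- arXiv:2006.10354 — 4 statements merged into one kernel-verified Lean document; each statement's English description precedes it below -/
import Mathlib

section
/- Let (X, μ) be a measure space, v ∈ L^1(X, μ), and k̄ > 0. For k > 0 set g(k) := ∫_X max(|v(x)| − k, 0) dμ(x) and A_k := {x ∈ X : |v(x)| > k}. Suppose there exist constants C > 0 and s > 1 such that g(k) ≤ C μ(A_k)^s for every k ≥ k̄. Then v ∈ L^∞(X, μ) and ‖v‖_{L^∞(X,μ)} ≤ C^{1/s} · (s/(s−1)) · ‖v‖_{L^1(X,μ)}^{1 − 1/s} + k̄. -/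
open MeasureTheory

open Set Filter Topology

lemma aux_ae_bound
    {X : Type*} [MeasurableSpace X] (μ : Measure X) (v : X → ℝ)
    (hmeas : Measurable v)
    (hv : Integrable v μ) (kbar : ℝ) (hkbar : 0 < kbar)
    (C s : ℝ) (hC : 0 < C) (hs : 1 < s)
    (h : ∀ k : ℝ, kbar ≤ k →
      ∫ x, max (|v x| - k) 0 ∂μ ≤ C * (μ {x | k < |v x|}).toReal ^ s) :
    ∀ᵐ x ∂μ, |v x| ≤ C ^ (1 / s) * (s / (s - 1)) * (∫ x, |v x| ∂μ) ^ (1 - 1 / s) + kbar := by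
  have hs0 : (0:ℝ) < s := lt_trans one_pos hs
  have hθ : 0 < 1 - 1/s := by
    have : 1/s < 1 := by rw [div_lt_one hs0]; exact hs
    linarith
  set g : ℝ → ℝ := fun k => ∫ x, max (|v x| - k) 0 ∂μ with hgdef
  set m : ℝ → ℝ := fun k => (μ {x | k < |v x|}).toReal with hmdef
  have hint : ∀ k : ℝ, 0 < k → Integrable (fun x => max (|v x| - k) 0) μ := by
    intro k hk
    refine hv.abs.mono ((hmeas.abs.sub_const k).max measurable_const).aestronglyMeasurable ?_
    filter_upwards with x
    rw [Real.norm_eq_abs, Real.norm_eq_abs, abs_abs,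
      abs_of_nonneg (le_max_right _ _ : (0:ℝ) ≤ max (|v x| - k) 0)]
    exact max_le (by linarith [abs_nonneg (v x)]) (abs_nonneg _)
  have hg0 : ∀ k, 0 ≤ g k := fun k => integral_nonneg fun x => le_max_right _ _
  have hganti : ∀ k₁ k₂ : ℝ, 0 < k₁ → k₁ ≤ k₂ → g k₂ ≤ g k₁ := fun k₁ k₂ h1 hk =>
    integral_mono (hint k₂ (lt_of_lt_of_le h1 hk)) (hint k₁ h1)
      (fun x => max_le_max (by linarith) le_rfl)
  have Afin : ∀ k : ℝ, 0 < k → μ {x | k < |v x|} < ⊤ := fun k hk =>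
    hv.abs.measure_gt_lt_top hk
  have hmeasA : ∀ k : ℝ, MeasurableSet {x | k < |v x|} := fun k =>
    measurableSet_lt measurable_const hmeas.abs
  have hm0 : ∀ k, 0 ≤ m k := fun k => ENNReal.toReal_nonneg
  have hind : ∀ k : ℝ, 0 < k → Integrable ({x | k < |v x|}.indicator (fun _ => (1:ℝ))) μ := by
    intro k hk
    rw [integrable_indicator_iff (hmeasA k)]
    exact integrableOn_const (Afin k hk).ne
  have hindint : ∀ k : ℝ, ∫ x, {x | k < |v x|}.indicator (fun _ => (1:ℝ)) x ∂μ = m k :=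
    fun k => integral_indicator_one (hmeasA k)
  -- Lipschitz-type estimate
  have hlip : ∀ k₁ k₂ : ℝ, 0 < k₁ → k₁ ≤ k₂ → g k₁ - g k₂ ≤ (k₂ - k₁) * m k₁ := by
    intro k₁ k₂ hk₁ hk
    have e1 : g k₁ - g k₂ = ∫ x, (max (|v x| - k₁) 0 - max (|v x| - k₂) 0) ∂μ :=
      (integral_sub (hint k₁ hk₁) (hint k₂ (lt_of_lt_of_le hk₁ hk))).symm
    rw [e1]
    have e2 : ∫ x, (k₂ - k₁) * {x | k₁ < |v x|}.indicator (fun _ => (1:ℝ)) x ∂μ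
        = (k₂ - k₁) * m k₁ := by rw [integral_const_mul, hindint]
    rw [← e2]
    refine integral_mono ((hint k₁ hk₁).sub (hint k₂ (lt_of_lt_of_le hk₁ hk)))
      ((hind k₁ hk₁).const_mul _) ?_
    intro x
    dsimp only
    by_cases hx : k₁ < |v x|
    · rw [indicator_of_mem (by exact hx : x ∈ {x | k₁ < |v x|}), mul_one]
      have h1 : max (|v x| - k₁) 0 = |v x| - k₁ := max_eq_left (by linarith)
      have h2 : |v x| - k₂ ≤ max (|v x| - k₂) 0 := le_max_left _ _
      linarith
    · push_neg at hx
      have h1 : max (|v x| - k₁) 0 = 0 := max_eq_right (by linarith)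
      have h2 : max (|v x| - k₂) 0 = 0 := max_eq_right (by linarith)
      rw [h1, h2, sub_zero]
      exact mul_nonneg (by linarith) (Set.indicator_nonneg (fun _ _ => zero_le_one) x)
  have hmanti : ∀ k, kbar ≤ k → m k ≤ m kbar := by
    intro k hk
    exact ENNReal.toReal_mono (Afin kbar hkbar).ne
      (measure_mono (fun x hx => lt_of_le_of_lt hk hx))
  -- continuity of g on [kbar, b]
  have gcont : ∀ b : ℝ, ContinuousOn g (Icc kbar b) := by
    intro b
    refine (LipschitzOnWith.of_dist_le_mul (K := Real.toNNReal (m kbar)) ?_).continuousOn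
    have key : ∀ x y : ℝ, x ∈ Icc kbar b → y ∈ Icc kbar b → x ≤ y →
        dist (g x) (g y) ≤ m kbar * dist x y := by
      intro x y hx hy hxy
      have hgxy : g y ≤ g x := hganti x y (lt_of_lt_of_le hkbar hx.1) hxy
      rw [Real.dist_eq, Real.dist_eq, abs_of_nonneg (by linarith : (0:ℝ) ≤ g x - g y),
        abs_of_nonpos (by linarith : x - y ≤ 0)]
      calc g x - g y ≤ (y - x) * m x := hlip x y (lt_of_lt_of_le hkbar hx.1) hxy
        _ ≤ (y - x) * m kbar := mul_le_mul_of_nonneg_left (hmanti x hx.1) (by linarith)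
        _ = m kbar * -(x - y) := by ring
    intro x hx y hy
    rw [Real.coe_toNNReal _ (hm0 kbar)]
    rcases le_total x y with hxy | hxy
    · exact key x y hx hy hxy
    · rw [dist_comm (g x), dist_comm x]
      exact key y x hy hx hxy
  -- right derivative of g
  have hderiv : ∀ k : ℝ, 0 < k → HasDerivWithinAt g (-(m k)) (Ioi k) k := by
    intro k hk
    rw [hasDerivWithinAt_iff_tendsto_slope, diff_singleton_eq_self (by simp : k ∉ Ioi k)]
    have key : Tendsto (fun y => ∫ x, (max (|v x| - y) 0 - max (|v x| - k) 0) / (y - k) ∂μ)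
        (𝓝[>] k) (𝓝 (∫ x, -({x | k < |v x|}.indicator (fun _ => (1:ℝ)) x) ∂μ)) := by
      apply tendsto_integral_filter_of_dominated_convergence
        ({x | k < |v x|}.indicator (fun _ => (1:ℝ)))
      · filter_upwards with y
        exact ((((hmeas.abs.sub_const y).max measurable_const).sub
          ((hmeas.abs.sub_const k).max measurable_const)).div_const _).aestronglyMeasurable
      · filter_upwards [self_mem_nhdsWithin] with y (hy : k < y)
        filter_upwards with x
        by_cases hx : k < |v x|
        · rw [indicator_of_mem (by exact hx : x ∈ {x | k < |v x|})]
          have h2 : max (|v x| - k) 0 = |v x| - k := max_eq_left (by linarith)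
          rw [h2]
          have hub : max (|v x| - y) 0 - (|v x| - k) ≤ 0 := by
            rcases le_total (|v x| - y) 0 with h' | h'
            · rw [max_eq_right h']; linarith
            · rw [max_eq_left h']; linarith
          have hlb : -(y - k) ≤ max (|v x| - y) 0 - (|v x| - k) := by
            have := le_max_left (|v x| - y) (0:ℝ)
            linarith
          rw [Real.norm_eq_abs, abs_div, abs_of_nonpos hub, abs_of_pos (by linarith : 0 < y - k),
            div_le_one (by linarith : 0 < y - k)]
          linarith
        · push_neg at hx
          have h1 : max (|v x| - y) 0 = 0 := max_eq_right (by linarith)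
          have h2 : max (|v x| - k) 0 = 0 := max_eq_right (by linarith)
          rw [indicator_of_notMem (by simpa using not_lt.2 hx : x ∉ {x | k < |v x|}), h1, h2]
          simp
      · exact hind k hk
      · filter_upwards with x
        by_cases hx : k < |v x|
        · have hx1 : {x | k < |v x|}.indicator (fun _ => (1:ℝ)) x = 1 :=
            indicator_of_mem (by exact hx) _
          rw [hx1]
          have hev : (fun _ : ℝ => (-1:ℝ)) =ᶠ[𝓝[>] k]
              (fun y => (max (|v x| - y) 0 - max (|v x| - k) 0) / (y - k)) := by
            filter_upwards [Ioo_mem_nhdsGT_of_mem (⟨le_refl k, hx⟩ : k ∈ Ico k (|v x|))]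
              with y hy
            have h1 : max (|v x| - y) 0 = |v x| - y := max_eq_left (by linarith [hy.2])
            have h2 : max (|v x| - k) 0 = |v x| - k := max_eq_left (by linarith)
            rw [h1, h2, eq_div_iff (by intro hh; have := hy.1; simp at hy; nlinarith [hy.1] :
              y - k ≠ 0)]
            ring
          exact Tendsto.congr' hev tendsto_const_nhds
        · push_neg at hx
          have hx1 : {x | k < |v x|}.indicator (fun _ => (1:ℝ)) x = 0 :=
            indicator_of_notMem (by simpa using not_lt.2 hx) _
          rw [hx1]
          have hev : (fun _ : ℝ => (0:ℝ)) =ᶠ[𝓝[>] k]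
              (fun y => (max (|v x| - y) 0 - max (|v x| - k) 0) / (y - k)) := by
            filter_upwards [self_mem_nhdsWithin] with y (hy : k < y)
            have h1 : max (|v x| - y) 0 = 0 := max_eq_right (by linarith)
            have h2 : max (|v x| - k) 0 = 0 := max_eq_right (by linarith)
            rw [h1, h2, sub_zero, zero_div]
          rw [show -(0:ℝ) = 0 by ring]
          exact Tendsto.congr' hev tendsto_const_nhds
    have e3 : ∫ x, -({x | k < |v x|}.indicator (fun _ => (1:ℝ)) x) ∂μ = -(m k) := by
      rw [integral_neg, hindint]
    rw [e3] at key
    refine Tendsto.congr' ?_ key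
    filter_upwards [self_mem_nhdsWithin] with y (hy : k < y)
    rw [slope_def_field, integral_div, integral_sub (hint y (lt_trans hk hy)) (hint k hk)]
  -- main iteration constants
  set cθ : ℝ := (1 - 1/s) * C ^ (-(1/s)) with hcθdef
  have hcθ : 0 < cθ := mul_pos hθ (Real.rpow_pos_of_pos hC _)
  set K : ℝ := kbar + g kbar ^ (1 - 1/s) / cθ with hKdef
  have hKb : kbar ≤ K := le_add_of_nonneg_right
    (div_nonneg (Real.rpow_nonneg (hg0 kbar) _) hcθ.le)
  -- key vanishing claim
  have main : ∀ b : ℝ, K ≤ b → g b = 0 := by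
    intro b hb
    by_contra hgb
    have hgbpos : 0 < g b := lt_of_le_of_ne (hg0 b) (Ne.symm hgb)
    have hbk : kbar ≤ b := le_trans hKb hb
    have hgpos : ∀ k ∈ Icc kbar b, 0 < g k := fun k hk =>
      lt_of_lt_of_le hgbpos (hganti k b (lt_of_lt_of_le hkbar hk.1) hk.2)
    have Gb_le : g b ^ (1 - 1/s) ≤ g kbar ^ (1 - 1/s) - cθ * (b - kbar) := by
      have := image_le_of_deriv_right_le_deriv_boundary
        (f := fun k => g k ^ (1 - 1/s))
        (f' := fun k => -(m k) * (1 - 1/s) * g k ^ ((1 - 1/s) - 1))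
        (a := kbar) (b := b)
        (B := fun r => g kbar ^ (1 - 1/s) - cθ * (r - kbar))
        (B' := fun _ => -cθ)
        ?hf ?hf' ?ha ?hB ?hB' ?bound
      · exact this ⟨hbk, le_refl b⟩
      case hf =>
        exact ContinuousOn.rpow_const (gcont b) (fun k hk => Or.inl (ne_of_gt (hgpos k hk)))
      case hf' =>
        intro k hk
        have hd : HasDerivWithinAt g (-(m k)) (Ici k) k :=
          hasDerivWithinAt_Ioi_iff_Ici.1 (hderiv k (lt_of_lt_of_le hkbar hk.1))
        exact hd.rpow_const (Or.inl (ne_of_gt (hgpos k ⟨hk.1, hk.2.le⟩)))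
      case ha => simp
      case hB =>
        exact (continuous_const.sub (continuous_const.mul
          (continuous_id.sub continuous_const))).continuousOn
      case hB' =>
        intro k hk
        have : HasDerivAt (fun r : ℝ => g kbar ^ (1 - 1/s) - cθ * (r - kbar)) (-cθ) k := by
          exact ((hasDerivAt_const k (g kbar ^ (1 - 1/s))).sub
            (((hasDerivAt_id k).sub_const kbar).const_mul cθ)).congr_deriv (by ring)
        exact this.hasDerivWithinAt
      case bound =>
        intro k hk
        have hgk : 0 < g k := hgpos k ⟨hk.1, hk.2.le⟩
        have hkk : kbar ≤ k := hk.1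
        -- from the hypothesis: m k ≥ (g k / C)^(1/s)
        have hmk : (g k / C) ^ (1/s) ≤ m k := by
          have h1 : g k / C ≤ m k ^ s := by
            rw [div_le_iff₀ hC]
            linarith [h k hkk]
          have h2 : (g k / C) ^ (1/s) ≤ (m k ^ s) ^ (1/s) :=
            Real.rpow_le_rpow (div_nonneg (hg0 k) hC.le) h1 (by positivity)
          rwa [← Real.rpow_mul (hm0 k), mul_one_div_cancel (ne_of_gt hs0),
            Real.rpow_one] at h2
        have hgkp : (0:ℝ) < g k ^ ((1 - 1/s) - 1) := Real.rpow_pos_of_pos hgk _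
        have e : (g k / C) ^ (1/s) * g k ^ ((1 - 1/s) - 1) = C ^ (-(1/s)) := by
          have hg1 : g k ^ (1/s) ≠ 0 := ne_of_gt (Real.rpow_pos_of_pos hgk _)
          have hC1 : C ^ (1/s) ≠ 0 := ne_of_gt (Real.rpow_pos_of_pos hC _)
          rw [Real.div_rpow (hg0 k) hC.le, show (1 - 1/s) - 1 = -(1/s) by ring,
            Real.rpow_neg hC.le, Real.rpow_neg (hg0 k)]
          field_simp
        have key2 : C ^ (-(1/s)) ≤ m k * g k ^ ((1 - 1/s) - 1) := by
          rw [← e]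
          exact mul_le_mul_of_nonneg_right hmk hgkp.le
        have key3 : (1 - 1/s) * C ^ (-(1/s)) ≤ (1 - 1/s) * (m k * g k ^ ((1 - 1/s) - 1)) :=
          mul_le_mul_of_nonneg_left key2 hθ.le
        rw [hcθdef]
        nlinarith [key3]
    have hGbpos : 0 < g b ^ (1 - 1/s) := Real.rpow_pos_of_pos hgbpos _
    have hlt : cθ * (b - kbar) < g kbar ^ (1 - 1/s) := by linarith
    have hblt : b < K := by
      have : b - kbar < g kbar ^ (1 - 1/s) / cθ := (lt_div_iff₀ hcθ).2 (by linarith)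
      rw [hKdef]; linarith
    exact absurd hb (not_le.2 hblt)
  -- a.e. bounds at levels K + 1/(n+1)
  have hae : ∀ n : ℕ, ∀ᵐ x ∂μ, |v x| ≤ K + 1/(n+1) := by
    intro n
    have hpos : (0:ℝ) < 1/(n+1) := by positivity
    have h0 : g (K + 1/(n+1)) = 0 := main _ (le_add_of_nonneg_right hpos.le)
    have hz := (integral_eq_zero_iff_of_nonneg (fun x => le_max_right _ _)
      (hint _ (add_pos (lt_of_lt_of_le hkbar hKb) hpos))).1 h0
    filter_upwards [hz] with x hx
    simp only [Pi.zero_apply] at hx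
    have h2 : |v x| - (K + 1/(n+1)) ≤ 0 := hx ▸ le_max_left _ _
    linarith
  have haeK : ∀ᵐ x ∂μ, |v x| ≤ K := by
    filter_upwards [ae_all_iff.2 hae] with x hx
    by_contra hcon
    push_neg at hcon
    obtain ⟨n, hn⟩ := exists_nat_one_div_lt (by linarith : (0:ℝ) < |v x| - K)
    linarith [hx n]
  -- compare K with the stated bound
  have hKle : K ≤ C ^ (1/s) * (s/(s-1)) * (∫ x, |v x| ∂μ) ^ (1 - 1/s) + kbar := by
    have hg1 : g kbar ≤ ∫ x, |v x| ∂μ :=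
      integral_mono (hint kbar hkbar) hv.abs
        (fun x => max_le (by linarith [abs_nonneg (v x)]) (abs_nonneg _))
    have hg2 : g kbar ^ (1 - 1/s) ≤ (∫ x, |v x| ∂μ) ^ (1 - 1/s) :=
      Real.rpow_le_rpow (hg0 kbar) hg1 hθ.le
    have hdiv : g kbar ^ (1 - 1/s) / cθ ≤ (∫ x, |v x| ∂μ) ^ (1 - 1/s) / cθ := by gcongr
    have hs1 : s - 1 ≠ 0 := by linarith
    have hsne : s ≠ 0 := ne_of_gt hs0
    have hPne : C ^ (1/s) ≠ 0 := ne_of_gt (Real.rpow_pos_of_pos hC _)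
    have heq : (∫ x, |v x| ∂μ) ^ (1 - 1/s) / cθ
        = C ^ (1/s) * (s/(s-1)) * (∫ x, |v x| ∂μ) ^ (1 - 1/s) := by
      rw [hcθdef, Real.rpow_neg hC.le]
      field_simp
    rw [hKdef]
    rw [heq] at hdiv
    linarith
  filter_upwards [haeK] with x hx
  exact le_trans hx hKle

/-- If `g(k) = ∫ max(|v| - k, 0) dμ ≤ C μ({|v| > k})^s` for all `k ≥ k̄`,
then `v ∈ L^∞` and `‖v‖_∞ ≤ C^{1/s} (s/(s-1)) ‖v‖_{L¹}^{1 - 1/s} + k̄`. -/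
theorem linfty_bound_of_level_set_estimate
    {X : Type*} [MeasurableSpace X] (μ : Measure X) (v : X → ℝ)
    (hv : Integrable v μ) (kbar : ℝ) (hkbar : 0 < kbar)
    (C s : ℝ) (hC : 0 < C) (hs : 1 < s)
    (h : ∀ k : ℝ, kbar ≤ k →
      ∫ x, max (|v x| - k) 0 ∂μ ≤ C * (μ {x | k < |v x|}).toReal ^ s) :
    MemLp v ⊤ μ ∧
      (eLpNorm v ⊤ μ).toReal ≤
        C ^ (1 / s) * (s / (s - 1)) * (∫ x, |v x| ∂μ) ^ (1 - 1 / s) + kbar := by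
  obtain ⟨w, hwsm, hvw⟩ : ∃ w, StronglyMeasurable w ∧ v =ᵐ[μ] w :=
    ⟨hv.aestronglyMeasurable.mk v, hv.aestronglyMeasurable.stronglyMeasurable_mk,
      hv.aestronglyMeasurable.ae_eq_mk⟩
  have hwm : Measurable w := hwsm.measurable
  have hw : Integrable w μ := hv.congr hvw
  have habs : ∀ᵐ x ∂μ, |v x| = |w x| := hvw.mono fun x hx => by rw [hx]
  have hsets : ∀ k : ℝ, μ {x | k < |v x|} = μ {x | k < |w x|} := by
    intro k
    apply measure_congr
    filter_upwards [hvw] with x hx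
    show (k < |v x|) = (k < |w x|)
    rw [hx]
  have hints : ∀ k : ℝ, ∫ x, max (|v x| - k) 0 ∂μ = ∫ x, max (|w x| - k) 0 ∂μ :=
    fun k => integral_congr_ae (hvw.mono fun x hx => by dsimp only; rw [hx])
  have hL1 : ∫ x, |v x| ∂μ = ∫ x, |w x| ∂μ := integral_congr_ae habs
  have h' : ∀ k : ℝ, kbar ≤ k →
      ∫ x, max (|w x| - k) 0 ∂μ ≤ C * (μ {x | k < |w x|}).toReal ^ s := by
    intro k hk
    rw [← hints k, ← hsets k]
    exact h k hk
  have hb := aux_ae_bound μ w hwm hw kbar hkbar C s hC hs h'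
  rw [← hL1] at hb
  have habound : ∀ᵐ x ∂μ, ‖v x‖ ≤
      C ^ (1 / s) * (s / (s - 1)) * (∫ x, |v x| ∂μ) ^ (1 - 1 / s) + kbar := by
    filter_upwards [hb, habs] with x hx hax
    rw [Real.norm_eq_abs, hax]
    exact hx
  have hM0 : 0 ≤ C ^ (1 / s) * (s / (s - 1)) * (∫ x, |v x| ∂μ) ^ (1 - 1 / s) + kbar := by
    have h1 : (0:ℝ) ≤ C ^ (1 / s) := (Real.rpow_pos_of_pos hC _).le
    have h2 : (0:ℝ) ≤ s / (s - 1) := div_nonneg (by linarith) (by linarith)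
    have h3 : (0:ℝ) ≤ (∫ x, |v x| ∂μ) ^ (1 - 1 / s) :=
      Real.rpow_nonneg (integral_nonneg fun x => abs_nonneg _) _
    positivity
  constructor
  · exact memLp_top_of_bound hv.aestronglyMeasurable _ habound
  · rw [eLpNorm_exponent_top]
    exact ENNReal.toReal_le_of_le_ofReal hM0 (eLpNormEssSup_le_of_ae_bound habound)
end

section
/- Let (X, μ) be a finite measure space and let v ∈ L^1(X, μ). For k > 0 set g(k) := ∫_X max(|v(x)| − k, 0) dμ(x) and A_k := {x ∈ X : |v(x)| > k}. Suppose there exist constants C > 0 and s > 1 such that g(k) ≤ C μ(A_k)^s for every k > 0. Then v ∈ L^∞(X, μ) and ‖v‖_{L^∞(X,μ)} ≤ C · (s/(s−1))^s · μ(X)^{s−1}. -/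
open MeasureTheory Filter

set_option maxHeartbeats 2000000 in
lemma level_key {X : Type*} [MeasurableSpace X] (μ : Measure X) [IsFiniteMeasure μ]
    (v : X → ℝ) (hm : Measurable v) (hv : Integrable v μ)
    (C s : ℝ) (hC : 0 < C) (hs : 1 < s)
    (h : ∀ k : ℝ, 0 < k →
      ∫ x, max (|v x| - k) 0 ∂μ ≤ C * (μ {x | k < |v x|}).toReal ^ s)
    (hM : 0 < (μ Set.univ).toReal) :
    ∀ k : ℝ, C * (s / (s - 1)) ^ s * (μ Set.univ).toReal ^ (s - 1) < k →
      μ {x | k < |v x|} = 0 := by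
  set M := (μ Set.univ).toReal with hMdef
  set g : ℝ → ℝ := fun t => ∫ x, max (|v x| - t) 0 ∂μ with hgdef
  have hs0 : (0:ℝ) < s := by linarith
  have hs0' : s ≠ 0 := ne_of_gt hs0
  -- integrability
  have gint : ∀ t : ℝ, Integrable (fun x => max (|v x| - t) 0) μ :=
    fun t => (hv.abs.sub (integrable_const t)).pos_part
  have gnonneg : ∀ t : ℝ, 0 ≤ g t := fun t =>
    integral_nonneg fun x => le_max_right _ _
  have ganti : ∀ {t t' : ℝ}, t ≤ t' → g t' ≤ g t := by
    intro t t' htt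
    refine integral_mono (gint t') (gint t) fun x => ?_
    exact max_le_max (by linarith) le_rfl
  have fact2 : ∀ {t t' : ℝ}, t < t' →
      (t' - t) * (μ {x | t' < |v x|}).toReal ≤ g t - g t' := by
    intro t t' htt
    have hsmeas : MeasurableSet {x | t' < |v x|} :=
      measurableSet_lt measurable_const hm.abs
    have hle : ∀ x, Set.indicator {x | t' < |v x|} (fun _ => t' - t) x ≤
        max (|v x| - t) 0 - max (|v x| - t') 0 := by
      intro x
      simp only [Set.indicator_apply, Set.mem_setOf_eq]
      by_cases hx : t' < |v x|
      · rw [if_pos hx]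
        rw [max_eq_left (by linarith : (0:ℝ) ≤ |v x| - t),
          max_eq_left (by linarith : (0:ℝ) ≤ |v x| - t')]
        ring_nf; exact le_rfl
      · rw [if_neg hx]
        push_neg at hx
        rw [max_eq_right (by linarith : |v x| - t' ≤ 0)]
        simpa using le_max_right (|v x| - t) 0
    have hint : ∫ x, Set.indicator {x | t' < |v x|} (fun _ => t' - t) x ∂μ ≤
        ∫ x, (max (|v x| - t) 0 - max (|v x| - t') 0) ∂μ := integral_mono
      ((integrable_const (t' - t)).indicator hsmeas)
      ((gint t).sub (gint t')) hle
    rw [integral_indicator_const _ hsmeas, integral_sub (gint t) (gint t')] at hint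
    rw [smul_eq_mul, mul_comm] at hint
    exact hint
  have fact3 : ∀ {t t' : ℝ}, 0 < t → t < t' → 0 < g t' →
      t' - t ≤ C ^ (1/s) * (g t - g t') / (g t') ^ (1/s) := by
    intro t t' ht htt hgt
    have hμA : (μ {x | t' < |v x|}).toReal ≤ (g t - g t') / (t' - t) := by
      rw [le_div_iff₀ (by linarith)]
      have := fact2 htt
      linarith [fact2 htt]
    have h2 : g t' ≤ C * ((g t - g t') / (t' - t)) ^ s := by
      refine (h t' (by linarith)).trans ?_
      exact mul_le_mul_of_nonneg_left
        (Real.rpow_le_rpow ENNReal.toReal_nonneg hμA hs0.le) hC.le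
    have hQ0 : 0 ≤ (g t - g t') / (t' - t) :=
      le_trans ENNReal.toReal_nonneg hμA
    have h3 : (g t') ^ (1/s) ≤ C ^ (1/s) * ((g t - g t') / (t' - t)) := by
      calc (g t') ^ (1/s) ≤ (C * ((g t - g t') / (t' - t)) ^ s) ^ (1/s) :=
            Real.rpow_le_rpow (gnonneg t') h2 (by positivity)
        _ = C ^ (1/s) * ((g t - g t') / (t' - t)) := by
            rw [Real.mul_rpow hC.le (Real.rpow_nonneg hQ0 s),
              ← Real.rpow_mul hQ0, mul_one_div_cancel hs0', Real.rpow_one]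
    rw [le_div_iff₀ (Real.rpow_pos_of_pos hgt _)]
    calc (t' - t) * (g t') ^ (1/s) ≤
        (t' - t) * (C ^ (1/s) * ((g t - g t') / (t' - t))) :=
          mul_le_mul_of_nonneg_left h3 (by linarith)
      _ = C ^ (1/s) * (g t - g t') := by
          rw [mul_comm (t' - t), mul_assoc,
            div_mul_cancel₀ _ (by linarith : t' - t ≠ 0)]
  -- main construction
  intro k hk
  have hT1 : 1 < s / (s - 1) := (one_lt_div (by linarith)).2 (by linarith)
  set T := s / (s - 1) with hTdef
  set P := C * T * M ^ (s - 1) with hPdef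
  have hMpow : 0 < M ^ (s - 1) := Real.rpow_pos_of_pos hM _
  have hT0 : 0 < T := lt_trans one_pos hT1
  have hP : 0 < P := by positivity
  have hPK : P < C * T ^ s * M ^ (s - 1) := by
    have h1 : T < T ^ s := by
      nth_rewrite 1 [← Real.rpow_one T]
      exact (Real.rpow_lt_rpow_left_iff hT1).2 hs
    have := mul_lt_mul_of_pos_left h1 hC
    exact mul_lt_mul_of_pos_right this hMpow
  have hPk : P < k := hPK.trans hk
  set δ := (k - P) / (2 * P) with hδdef
  have hδ : 0 < δ := div_pos (by linarith) (by linarith)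
  set θ := (1 + δ) ^ (-s) with hθdef
  have h1δ : (0:ℝ) < 1 + δ := by linarith
  have hθ0 : 0 < θ := Real.rpow_pos_of_pos h1δ _
  have hθ1 : θ < 1 := Real.rpow_lt_one_of_one_lt_of_neg (by linarith) (by linarith)
  have hθs : θ ^ (1/s) = (1 + δ)⁻¹ := by
    rw [hθdef, ← Real.rpow_mul h1δ.le, show -s * (1/s) = -1 by field_simp,
      Real.rpow_neg_one]
  set k₀ := min 1 ((k - P) / 4) with hk₀def
  have hk₀ : 0 < k₀ := lt_min one_pos (by linarith)
  set a₀ := g k₀ with ha₀def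
  have ha₀nn : 0 ≤ a₀ := gnonneg k₀
  have ha₀le : a₀ ≤ C * M ^ s := by
    refine (h k₀ hk₀).trans ?_
    refine mul_le_mul_of_nonneg_left ?_ hC.le
    exact Real.rpow_le_rpow ENNReal.toReal_nonneg
      (ENNReal.toReal_mono (measure_ne_top μ _) (measure_mono (Set.subset_univ _))) hs0.le
  have hPδ : P * (1 + δ) = P + (k - P) / 2 := by
    have h2 : P * δ = (k - P) / 2 := by
      rw [hδdef]
      field_simp
    rw [mul_add, mul_one, h2]
  have hbk : k₀ + P * (1 + δ) < k := by
    have h1 := min_le_right (1:ℝ) ((k - P) / 4)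
    rw [hPδ]
    have : k₀ ≤ (k - P) / 4 := h1
    linarith
  set k'' := (k₀ + P * (1 + δ) + k) / 2 with hk''def
  have hk''1 : k₀ + P * (1 + δ) < k'' := by rw [hk''def]; linarith
  have hk''2 : k'' < k := by rw [hk''def]; linarith
  have hk''0 : k₀ < k'' := by nlinarith
  clear_value T P δ θ a₀
  -- main: g k'' = 0
  have hgk'' : g k'' = 0 := by
    rcases eq_or_lt_of_le ha₀nn with ha₀ | ha₀
    · refine le_antisymm (le_trans (ganti hk''0.le) ?_) (gnonneg _)
      rw [← ha₀def]
      exact ha₀.symm.le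
    · set δseq : ℕ → ℝ :=
        fun i => C ^ (1/s) * (θ ^ i * a₀ - θ ^ (i+1) * a₀) / (θ ^ (i+1) * a₀) ^ (1/s)
        with hδseq
      have hpowmono : ∀ i : ℕ, θ ^ (i+1) ≤ θ ^ i := fun i =>
        pow_le_pow_of_le_one hθ0.le hθ1.le (by omega)
      have hδseqnn : ∀ i, 0 ≤ δseq i := by
        intro i
        apply div_nonneg _ (Real.rpow_nonneg (by positivity) _)
        apply mul_nonneg (Real.rpow_nonneg hC.le _)
        nlinarith [hpowmono i]
      set D : ℕ → ℝ := fun n => ∑ i ∈ Finset.range n, δseq i with hD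
      have hDnn : ∀ n, 0 ≤ D n := fun n => Finset.sum_nonneg fun i _ => hδseqnn i
      have hDsucc : ∀ n, D (n+1) = D n + δseq n := fun n => Finset.sum_range_succ _ _
      have hD0 : D 0 = 0 := Finset.sum_range_zero _
      -- Claim E
      have hE : ∀ n : ℕ, ∀ t : ℝ, θ ^ n * a₀ < g t → t ≤ k₀ + D n := by
        intro n
        induction n with
        | zero =>
          intro t ht
          simp only [pow_zero, one_mul] at ht
          by_contra hcon
          push_neg at hcon
          have hgt : g t ≤ g k₀ := ganti (by rw [hD0] at hcon; linarith)
          rw [← ha₀def] at hgt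
          linarith
        | succ n ih =>
          intro t ht
          set S : Set ℝ := insert k₀ {u | k₀ ≤ u ∧ θ ^ n * a₀ < g u} with hS
          have hSbd : ∀ u ∈ S, u ≤ k₀ + D n := by
            rintro u (rfl | ⟨hu1, hu2⟩)
            · linarith [hDnn n]
            · exact ih u hu2
          have hSne : S.Nonempty := ⟨k₀, Set.mem_insert _ _⟩
          have hSbdd : BddAbove S := ⟨k₀ + D n, fun u hu => hSbd u hu⟩
          set m := sSup S with hm
          have hm0 : k₀ ≤ m := le_csSup hSbdd (Set.mem_insert _ _)
          have hmD : m ≤ k₀ + D n := csSup_le hSne hSbd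
          by_cases hkm : t ≤ m
          · have := hδseqnn n
            rw [hDsucc]
            linarith
          · push_neg at hkm
            have hθa : 0 < θ ^ (n+1) * a₀ := by positivity
            have hgtpos : 0 < g t := lt_trans hθa ht
            have key : ∀ u, m < u → u < t → t - u ≤ δseq n := by
              intro u hu1 hu2
              have hgu : g u ≤ θ ^ n * a₀ := by
                by_contra hgu
                push_neg at hgu
                have hmem : u ∈ S := Set.mem_insert_of_mem _ ⟨le_trans hm0 hu1.le, hgu⟩
                exact absurd (le_csSup hSbdd hmem) (not_le.2 hu1)
              have hf3 := fact3 (lt_of_lt_of_le hk₀ (le_trans hm0 hu1.le)) hu2 hgtpos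
              refine hf3.trans ?_
              apply div_le_div₀
              · apply mul_nonneg (Real.rpow_nonneg hC.le _)
                nlinarith [hpowmono n]
              · apply mul_le_mul_of_nonneg_left _ (Real.rpow_nonneg hC.le _)
                linarith
              · exact Real.rpow_pos_of_pos hθa _
              · exact Real.rpow_le_rpow hθa.le ht.le (by positivity)
            have htm : t ≤ m + δseq n := by
              by_contra hcon
              push_neg at hcon
              have h1 := key (m + (t - m - δseq n) / 2)
                (by linarith [hδseqnn n]) (by linarith [hδseqnn n])
              linarith
            rw [hDsucc]
            linarith
      -- geometric bound on D n
      set r := θ ^ (1 - 1/s) with hr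
      have hss : 1/s < 1 := by rw [div_lt_one hs0]; exact hs
      have hs1s : 0 < 1 - 1/s := by linarith
      have hr0 : 0 < r := Real.rpow_pos_of_pos hθ0 _
      have hr1 : r < 1 := Real.rpow_lt_one hθ0.le hθ1 hs1s
      have hrec : ∀ i : ℕ, δseq (i+1) = r * δseq i := by
        intro i
        have hden : ((θ:ℝ) ^ (i+2) * a₀) ^ (1/s) = θ ^ (1/s) * (θ ^ (i+1) * a₀) ^ (1/s) := by
          rw [show (θ:ℝ) ^ (i+2) * a₀ = θ * (θ ^ (i+1) * a₀) by ring,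
            Real.mul_rpow hθ0.le (by positivity)]
        have hth : r * θ ^ (1/s) = θ := by
          rw [hr, ← Real.rpow_add hθ0, show (1 - 1/s) + 1/s = 1 by ring, Real.rpow_one]
        have hd0 : ((θ:ℝ) ^ (i+1) * a₀) ^ (1/s) ≠ 0 :=
          ne_of_gt (Real.rpow_pos_of_pos (by positivity) _)
        have hth0 : (θ:ℝ) ^ (1/s) ≠ 0 := ne_of_gt (Real.rpow_pos_of_pos hθ0 _)
        show C ^ (1/s) * (θ ^ (i+1) * a₀ - θ ^ (i+1+1) * a₀) / (θ ^ (i+1+1) * a₀) ^ (1/s)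
          = r * (C ^ (1/s) * (θ ^ i * a₀ - θ ^ (i+1) * a₀) / (θ ^ (i+1) * a₀) ^ (1/s))
        rw [show i+1+1 = i+2 from rfl, hden, ← mul_div_assoc]
        rw [div_eq_div_iff (by positivity) hd0]
        rw [pow_succ θ (i+1), pow_succ θ i]
        linear_combination (-(C ^ (1/s) * (θ ^ i * a₀ - θ ^ i * θ * a₀) *
          ((θ ^ i * θ * a₀) ^ (1/s)))) * hth
      have hform : ∀ i, δseq i = δseq 0 * r ^ i := by
        intro i
        induction i with
        | zero => simp
        | succ n ih => rw [hrec, ih, pow_succ]; ring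
      have hsum : ∀ n, D n ≤ δseq 0 / (1 - r) := by
        intro n
        have h1 : D n = δseq 0 * ∑ i ∈ Finset.range n, r ^ i := by
          rw [hD, Finset.mul_sum]
          exact Finset.sum_congr rfl fun i _ => hform i
        rw [h1]
        have h2 : ∑ i ∈ Finset.range n, r ^ i ≤ 1 / (1 - r) := by
          have h3 := geom_sum_mul r n
          rw [le_div_iff₀ (by linarith)]
          nlinarith [pow_nonneg hr0.le n]
        calc δseq 0 * ∑ i ∈ Finset.range n, r ^ i ≤ δseq 0 * (1 / (1 - r)) :=
              mul_le_mul_of_nonneg_left h2 (hδseqnn 0)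
          _ = δseq 0 / (1 - r) := by ring
      have hBern : r ≤ (1 - 1/s) * θ + 1/s := by
        have hgm := Real.geom_mean_le_arith_mean2_weighted
          (w₁ := 1 - 1/s) (w₂ := 1/s) (p₁ := θ) (p₂ := 1)
          (le_of_lt hs1s) (by positivity) hθ0.le zero_le_one (by ring)
        rw [Real.one_rpow, mul_one, mul_one] at hgm
        exact hgm
      have h1r : (1 - 1/s) * (1 - θ) ≤ 1 - r := by nlinarith
      have hδ0 : δseq 0 = C ^ (1/s) * a₀ ^ (1 - 1/s) * (1 - θ) * (1 + δ) := by
        show C ^ (1/s) * (θ ^ 0 * a₀ - θ ^ (0+1) * a₀) / (θ ^ (0+1) * a₀) ^ (1/s) = _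
        rw [pow_zero, pow_one, one_mul, Real.mul_rpow hθ0.le ha₀.le, hθs]
        rw [show a₀ ^ (1 - 1/s) = a₀ ^ (1:ℝ) / a₀ ^ (1/s) from Real.rpow_sub ha₀ 1 (1/s),
          Real.rpow_one]
        have ha0s : (0:ℝ) < a₀ ^ (1/s) := Real.rpow_pos_of_pos ha₀ _
        rw [div_eq_iff (by positivity)]
        field_simp [ha0s.ne', h1δ.ne']
      have hCM : C ^ (1/s) * (C * M ^ s) ^ (1 - 1/s) = C * M ^ (s - 1) := by
        rw [Real.mul_rpow hC.le (Real.rpow_nonneg hM.le s), ← Real.rpow_mul hM.le,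
          show s * (1 - 1/s) = s - 1 by field_simp, ← mul_assoc,
          ← Real.rpow_add hC, show 1/s + (1 - 1/s) = 1 by ring, Real.rpow_one]
      have hDle : ∀ n, D n ≤ P * (1 + δ) := by
        intro n
        refine (hsum n).trans ?_
        have h1θ : 0 < 1 - θ := by linarith
        have h1rpos : 0 < 1 - r := by linarith
        have hden2 : 0 < (1 - 1/s) * (1 - θ) := by positivity
        calc δseq 0 / (1 - r) ≤ δseq 0 / ((1 - 1/s) * (1 - θ)) := by
              apply div_le_div_of_nonneg_left (hδseqnn 0) hden2 h1r
          _ = C ^ (1/s) * a₀ ^ (1 - 1/s) * (1 + δ) / (1 - 1/s) := by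
              have hre : C ^ (1/s) * a₀ ^ (1 - 1/s) * (1 - θ) * (1 + δ)
                  = (C ^ (1/s) * a₀ ^ (1 - 1/s) * (1 + δ)) * (1 - θ) := by ring
              rw [hδ0, hre, mul_comm (1 - 1/s) (1 - θ), ← div_div,
                mul_div_cancel_right₀ _ h1θ.ne']
          _ ≤ C ^ (1/s) * (C * M ^ s) ^ (1 - 1/s) * (1 + δ) / (1 - 1/s) := by
              gcongr
          _ = P * (1 + δ) := by
              rw [hCM, hPdef, hTdef]
              have hs1 : s - 1 ≠ 0 := by linarith
              field_simp [hs0', hs1, hs1s.ne']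
      have hgk''le : ∀ n : ℕ, g k'' ≤ θ ^ n * a₀ := by
        intro n
        by_contra hcon
        push_neg at hcon
        have h1 := hE n k'' hcon
        have h2 := hDle n
        linarith
      have htend : Filter.Tendsto (fun n : ℕ => θ ^ n * a₀) Filter.atTop (nhds 0) := by
        have := (tendsto_pow_atTop_nhds_zero_of_lt_one hθ0.le hθ1).mul_const a₀
        simpa using this
      exact le_antisymm (ge_of_tendsto' htend hgk''le) (gnonneg _)
  -- conclude
  have hf2 := fact2 hk''2
  have hμk : (μ {x | k < |v x|}).toReal = 0 := by
    refine le_antisymm ?_ ENNReal.toReal_nonneg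
    nlinarith [gnonneg k, ENNReal.toReal_nonneg (a := μ {x | k < |v x|})]
  rw [ENNReal.toReal_eq_zero_iff] at hμk
  exact hμk.resolve_right (measure_ne_top μ _)

/-- On a finite measure space, if
`g(k) = ∫ max(|v| - k, 0) dμ ≤ C μ({|v| > k})^s` for all `k > 0`, then `v ∈ L^∞` and
`‖v‖_∞ ≤ C (s/(s-1))^s μ(X)^{s-1}`. -/
theorem linfty_bound_of_level_set_estimate_finite_measure
    {X : Type*} [MeasurableSpace X] (μ : Measure X) [IsFiniteMeasure μ]
    (v : X → ℝ) (hv : Integrable v μ)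
    (C s : ℝ) (hC : 0 < C) (hs : 1 < s)
    (h : ∀ k : ℝ, 0 < k →
      ∫ x, max (|v x| - k) 0 ∂μ ≤ C * (μ {x | k < |v x|}).toReal ^ s) :
    MemLp v ⊤ μ ∧
      (eLpNorm v ⊤ μ).toReal ≤ C * (s / (s - 1)) ^ s * (μ Set.univ).toReal ^ (s - 1) := by
  have hsm : (0:ℝ) < s - 1 := by linarith
  have hT0 : (0:ℝ) < s / (s - 1) := by positivity
  have hK0 : 0 ≤ C * (s / (s - 1)) ^ s * (μ Set.univ).toReal ^ (s - 1) := by positivity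
  by_cases hM : (μ Set.univ).toReal = 0
  · have h0 : μ Set.univ = 0 := by
      rcases (ENNReal.toReal_eq_zero_iff _).1 hM with h' | h'
      · exact h'
      · exact absurd h' (measure_ne_top μ _)
    have hμ0 : μ = 0 := Measure.measure_univ_eq_zero.1 h0
    constructor
    · exact ⟨hv.1, by simp [hμ0]⟩
    · rw [hμ0]
      simp [eLpNorm_measure_zero, Real.zero_rpow (show s - 1 ≠ 0 by linarith)]
  · have hM' : 0 < (μ Set.univ).toReal :=
      lt_of_le_of_ne ENNReal.toReal_nonneg (Ne.symm hM)
    set w := hv.1.mk v with hwdef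
    have hwm : Measurable w := hv.1.measurable_mk
    have hvw : v =ᵐ[μ] w := hv.1.ae_eq_mk
    have hwint : Integrable w μ := hv.congr hvw
    have hsets : ∀ k : ℝ, μ {x | k < |v x|} = μ {x | k < |w x|} := by
      intro k
      apply measure_congr
      exact Filter.eventuallyEq_set.2 (hvw.mono fun x hx => by
        rw [Set.mem_setOf_eq, Set.mem_setOf_eq, hx])
    have hints : ∀ k : ℝ, ∫ x, max (|w x| - k) 0 ∂μ = ∫ x, max (|v x| - k) 0 ∂μ :=
      fun k => integral_congr_ae (hvw.mono fun x hx => by simp only [hx])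
    have hw_h : ∀ k : ℝ, 0 < k →
        ∫ x, max (|w x| - k) 0 ∂μ ≤ C * (μ {x | k < |w x|}).toReal ^ s := by
      intro k hk
      rw [hints k, ← hsets k]
      exact h k hk
    have hkey := level_key μ w hwm hwint C s hC hs hw_h hM'
    have hae : ∀ᵐ x ∂μ, |v x| ≤ C * (s / (s - 1)) ^ s * (μ Set.univ).toReal ^ (s - 1) := by
      set K := C * (s / (s - 1)) ^ s * (μ Set.univ).toReal ^ (s - 1) with hKdef
      have hnull : μ {x | K < |v x|} = 0 := by
        have hsub : {x | K < |v x|} ⊆ ⋃ n : ℕ, {x | K + 1/((n:ℝ)+1) < |v x|} := by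
          intro x hx
          simp only [Set.mem_setOf_eq] at hx
          obtain ⟨n, hn⟩ := exists_nat_one_div_lt (show (0:ℝ) < |v x| - K by linarith)
          exact Set.mem_iUnion.2 ⟨n, by simp only [Set.mem_setOf_eq]; linarith⟩
        refine measure_mono_null hsub (measure_iUnion_null fun n => ?_)
        rw [hsets]
        apply hkey
        have hpos : (0:ℝ) < 1/((n:ℝ)+1) := by positivity
        linarith
      rw [ae_iff]
      convert hnull using 2
      ext x
      simp [not_le]
    constructor
    · exact memLp_top_of_bound hv.1 _ (hae.mono fun x hx => by rwa [Real.norm_eq_abs])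
    · have h1 : eLpNorm v ⊤ μ ≤
          ENNReal.ofReal (C * (s / (s - 1)) ^ s * (μ Set.univ).toReal ^ (s - 1)) := by
        rw [eLpNorm_exponent_top]
        exact eLpNormEssSup_le_of_ae_bound (hae.mono fun x hx => by rwa [Real.norm_eq_abs])
      exact ENNReal.toReal_le_of_le_ofReal hK0 h1
end

section
/- Let N ≥ 3, 1 < p < m, and let ρ : ℝ^N → ℝ be strictly positive with k1 |x|^2 ≤ 1/ρ(x) ≤ k2 |x|^2 for all |x| ≥ e, where k2 ≥ k1 > 0. Let α ∈ (0, 1/(m−1)) and β := (α(m−1)+1)/2. Then there exist constants C > 0 and a > 0 (depending only on m, p, N, α, k1, k2) such that for every T > 0 the function u(x,t) := C (T+t)^{α} F(x,t)^{1/(m−1)}, where F(x,t) := 1 − (log|x|) (T+t)^{−β}/a, satisfies the pointwise differential inequality ∂_t u(x,t) − ρ(x)^{−1} Δ_x (u^m)(x,t) − u(x,t)^p ≤ 0 at every point (x,t) with |x| > e, t > 0 and 0 < F(x,t) < 1. -/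
open MeasureTheory Filter Real

set_option maxHeartbeats 1000000

/-- The Laplacian of `f : ℝ^N → ℝ` at `x`, as the sum of the second derivatives of `f`
along the coordinate directions. -/
noncomputable def lap {N : ℕ} (f : EuclideanSpace ℝ (Fin N) → ℝ)
    (x : EuclideanSpace ℝ (Fin N)) : ℝ :=
  ∑ i : Fin N, deriv (deriv fun t : ℝ => f (x + t • EuclideanSpace.single i (1 : ℝ))) 0

private lemma lap_congr' {N : ℕ} {f g : EuclideanSpace ℝ (Fin N) → ℝ}
    {x : EuclideanSpace ℝ (Fin N)} (h : f =ᶠ[nhds x] g) : lap f x = lap g x := by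
  unfold lap
  refine Finset.sum_congr rfl fun i _ => ?_
  have hcont : Continuous fun τ : ℝ => x + τ • EuclideanSpace.single i (1:ℝ) := by fun_prop
  have hline : Tendsto (fun τ : ℝ => x + τ • EuclideanSpace.single i (1:ℝ)) (nhds 0) (nhds x) := by
    have := hcont.tendsto 0
    simpa using this
  have h2 := (h.comp_tendsto hline).deriv
  simp only [Function.comp_def] at h2
  exact h2.deriv_eq

private lemma second_deriv_1d (K c e A b : ℝ) (hA : 0 < A)
    (hB : 1 - c / 2 * Real.log A ≠ 0) :
    deriv (deriv fun τ : ℝ => K * (1 - c / 2 * Real.log (A + 2*b*τ + τ^2)) ^ e) 0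
      = K * e * ((e-1) * (1 - c/2*Real.log A)^(e-2) * (c*b/A)^2
          - (1 - c/2*Real.log A)^(e-1) * (c*(A - 2*b^2)/A^2)) := by
  set q : ℝ → ℝ := fun τ => A + 2*b*τ + τ^2 with hqdef
  set B : ℝ → ℝ := fun τ => 1 - c / 2 * Real.log (q τ) with hBdef
  have hq0 : q 0 = A := by simp [hqdef]
  have hB0 : B 0 = 1 - c/2 * Real.log A := by simp [hBdef, hq0]
  have hq : ∀ τ : ℝ, HasDerivAt q (2*b + 2*τ) τ := by
    intro τ
    have h1 : HasDerivAt (fun τ : ℝ => τ^2) (2*τ) τ := by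
      simpa using hasDerivAt_pow 2 τ
    have h2 := ((hasDerivAt_const τ A).add ((hasDerivAt_id τ).const_mul (2*b))).add h1
    exact h2.congr_deriv (by ring)
  have hBd : ∀ τ : ℝ, q τ ≠ 0 → HasDerivAt B (-(c/2) * ((2*b + 2*τ) / q τ)) τ := by
    intro τ hτ
    have h1 : HasDerivAt (fun τ => Real.log (q τ)) ((2*b + 2*τ) / q τ) τ := (hq τ).log hτ
    have h2 := (hasDerivAt_const τ (1:ℝ)).sub (h1.const_mul (c/2))
    exact h2.congr_deriv (by ring)
  have hqc : Continuous q := by fun_prop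
  have hqne : ∀ᶠ τ in nhds (0:ℝ), q τ ≠ 0 := hqc.continuousAt.eventually_ne (by rw [hq0]; exact hA.ne')
  have hBc : ContinuousAt B 0 := by
    have hl : ContinuousAt (fun τ => Real.log (q τ)) 0 :=
      (Real.continuousAt_log (by rw [hq0]; exact hA.ne')).comp hqc.continuousAt
    exact (continuousAt_const.sub (continuousAt_const.mul hl))
  have hBne : ∀ᶠ τ in nhds (0:ℝ), B τ ≠ 0 := hBc.eventually_ne (by rw [hB0]; exact hB)
  have hderiv1 : deriv (fun τ => K * B τ ^ e) =ᶠ[nhds (0:ℝ)]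
      fun τ => (K * e * (-(c/2))) * (B τ ^ (e-1) * ((2*b + 2*τ) / q τ)) := by
    filter_upwards [hqne, hBne] with τ hq0' hB0'
    have h := ((hBd τ hq0').rpow_const (p := e) (Or.inl hB0')).const_mul K
    rw [h.deriv]
    ring
  have h2 : deriv (deriv fun τ => K * B τ ^ e) 0
      = deriv (fun τ => (K * e * (-(c/2))) * (B τ ^ (e-1) * ((2*b + 2*τ) / q τ))) 0 :=
    hderiv1.deriv_eq
  rw [h2]
  have hBd0 : HasDerivAt B (-(c/2) * ((2*b + 2*0) / A)) 0 := by
    have := hBd 0 (by rw [hq0]; exact hA.ne')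
    rwa [hq0] at this
  have hpow : HasDerivAt (fun τ => B τ ^ (e-1))
      ((-(c/2) * ((2*b + 2*0) / A)) * (e-1) * B 0 ^ (e-1-1)) 0 :=
    hBd0.rpow_const (p := e-1) (Or.inl (by rw [hB0]; exact hB))
  have hlin : HasDerivAt (fun τ : ℝ => 2*b + 2*τ) 2 0 := by
    have := (hasDerivAt_const (0:ℝ) (2*b)).add ((hasDerivAt_id (0:ℝ)).const_mul 2)
    exact this.congr_deriv (by ring)
  have hdiv : HasDerivAt (fun τ => (2*b + 2*τ) / q τ)
      ((2 * q 0 - (2*b + 2*0) * (2*b + 2*0)) / q 0 ^ 2) 0 :=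
    hlin.div (hq 0) (by rw [hq0]; exact hA.ne')
  have hfull := ((hpow.mul hdiv).const_mul (K * e * (-(c/2))))
  rw [show deriv (fun τ => K * e * -(c / 2) * (B τ ^ (e - 1) * ((2 * b + 2 * τ) / q τ))) 0 = _ from hfull.deriv]
  rw [hq0, hB0]
  have hAne : A ≠ 0 := hA.ne'
  have he2 : e - 1 - 1 = e - 2 := by ring
  rw [he2]
  field_simp
  ring

private lemma norm_line_sq {N : ℕ} (x : EuclideanSpace ℝ (Fin N)) (i : Fin N) (τ : ℝ) :
    ‖x + τ • EuclideanSpace.single i (1:ℝ)‖^2 = ‖x‖^2 + 2*(x i)*τ + τ^2 := by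
  have happ : ∀ j, (x + τ • EuclideanSpace.single i (1:ℝ)) j
      = x j + (if j = i then τ else 0) := by
    intro j
    simp [EuclideanSpace.single_apply, mul_ite]
  have hn : ∀ y : EuclideanSpace ℝ (Fin N), ‖y‖^2 = ∑ j, (y j)^2 := by
    intro y
    rw [EuclideanSpace.norm_eq, Real.sq_sqrt (by positivity)]
    simp [sq_abs]
  rw [hn, hn]
  have hterm : ∀ j, ((x + τ • EuclideanSpace.single i (1:ℝ)) j)^2
      = (x j)^2 + (if j = i then 2*τ*(x j) + τ^2 else 0) := by
    intro j
    rw [happ j]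
    split <;> ring
  rw [Finset.sum_congr rfl (fun j _ => hterm j), Finset.sum_add_distrib,
    Finset.sum_ite_eq' Finset.univ i (fun j => 2*τ*(x j) + τ^2)]
  simp
  ring

private lemma lap_log {N : ℕ} (K c e : ℝ) (x : EuclideanSpace ℝ (Fin N))
    (hx : 0 < ‖x‖) (hB : 1 - c * Real.log ‖x‖ ≠ 0) :
    lap (fun y => K * (1 - c * Real.log ‖y‖) ^ e) x
      = K * e * c / ‖x‖^2 * (c * (e-1) * (1 - c * Real.log ‖x‖)^(e-2)
          - ((N:ℝ) - 2) * (1 - c * Real.log ‖x‖)^(e-1)) := by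
  have hA : (0:ℝ) < ‖x‖^2 := by positivity
  have hAne : (‖x‖:ℝ)^2 ≠ 0 := hA.ne'
  have hlogx : Real.log (‖x‖^2) = 2 * Real.log ‖x‖ := by
    simpa using Real.log_pow ‖x‖ 2
  have hB' : 1 - c/2 * Real.log (‖x‖^2) ≠ 0 := by
    rw [hlogx]; convert hB using 2; ring
  have hco : ∀ i : Fin N, deriv (deriv fun τ : ℝ => (fun y => K * (1 - c * Real.log ‖y‖) ^ e)
      (x + τ • EuclideanSpace.single i (1:ℝ))) 0
      = K * e * ((e-1) * (1 - c*Real.log ‖x‖)^(e-2) * (c*(x i)/‖x‖^2)^2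
          - (1 - c*Real.log ‖x‖)^(e-1) * (c*(‖x‖^2 - 2*(x i)^2)/(‖x‖^2)^2)) := by
    intro i
    have hfun : (fun τ : ℝ => (fun y => K * (1 - c * Real.log ‖y‖) ^ e)
        (x + τ • EuclideanSpace.single i (1:ℝ)))
        = fun τ : ℝ => K * (1 - c / 2 * Real.log (‖x‖^2 + 2*(x i)*τ + τ^2)) ^ e := by
      funext τ
      have h2 : Real.log (‖x‖^2 + 2*(x i)*τ + τ^2)
          = 2 * Real.log ‖x + τ • EuclideanSpace.single i (1:ℝ)‖ := by
        rw [← norm_line_sq x i τ]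
        simpa using Real.log_pow ‖x + τ • EuclideanSpace.single i (1:ℝ)‖ 2
      rw [h2]
      ring_nf
    rw [hfun, second_deriv_1d K c e (‖x‖^2) (x i) hA hB']
    rw [hlogx]
    ring_nf
  have hsum : ∑ i, (x i)^2 = ‖x‖^2 := by
    rw [EuclideanSpace.norm_eq, Real.sq_sqrt (by positivity)]
    simp [sq_abs]
  set B1 := (1 - c*Real.log ‖x‖)^(e-2) with hB1
  set B2 := (1 - c*Real.log ‖x‖)^(e-1) with hB2
  have key : ∀ i : Fin N,
      K * e * ((e-1) * B1 * (c*(x i)/‖x‖^2)^2 - B2 * (c*(‖x‖^2 - 2*(x i)^2)/(‖x‖^2)^2))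
      = (K*e*((e-1)*B1*c^2 + 2*c*B2)/(‖x‖^2)^2) * (x i)^2 + (-(K*e*B2*c/‖x‖^2)) := by
    intro i
    field_simp
    ring
  unfold lap
  rw [Finset.sum_congr rfl (fun i _ => (hco i).trans (key i)), Finset.sum_add_distrib,
    ← Finset.mul_sum, hsum, Finset.sum_const, Finset.card_univ, Fintype.card_fin,
    nsmul_eq_mul]
  field_simp
  ring

/-- Subsolution estimate in the outer region: with
`F(x,t) = 1 - log|x| (T+t)^{-β}/a` and `u(x,t) = C (T+t)^α F(x,t)^{1/(m-1)}`, there are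
`C, a > 0` such that for every `T > 0`, at every point with `|x| > e`, `t > 0` and
`0 < F(x,t) < 1`, one has `∂_t u - ρ⁻¹ Δ(u^m) - u^p ≤ 0`. -/
theorem outer_subsolution
    (N : ℕ) (hN : 3 ≤ N) (m p : ℝ) (hp : 1 < p) (hpm : p < m)
    (ρ : EuclideanSpace ℝ (Fin N) → ℝ) (hρpos : ∀ x, 0 < ρ x)
    (k1 k2 : ℝ) (hk1 : 0 < k1) (hk12 : k1 ≤ k2)
    (hout : ∀ x : EuclideanSpace ℝ (Fin N), Real.exp 1 ≤ ‖x‖ →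
      k1 * ‖x‖ ^ 2 ≤ (ρ x)⁻¹ ∧ (ρ x)⁻¹ ≤ k2 * ‖x‖ ^ 2)
    (α β : ℝ) (hα : 0 < α) (hα' : α < 1 / (m - 1)) (hβ : β = (α * (m - 1) + 1) / 2) :
    ∃ C : ℝ, 0 < C ∧ ∃ a : ℝ, 0 < a ∧
      ∀ T : ℝ, 0 < T →
        let F : EuclideanSpace ℝ (Fin N) → ℝ → ℝ :=
          fun y s => 1 - Real.log ‖y‖ * (T + s) ^ (-β) / a
        let u : EuclideanSpace ℝ (Fin N) → ℝ → ℝ :=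
          fun y s => C * (T + s) ^ α * F y s ^ (1 / (m - 1))
        ∀ (x : EuclideanSpace ℝ (Fin N)) (t : ℝ),
          Real.exp 1 < ‖x‖ → 0 < t → 0 < F x t → F x t < 1 →
          deriv (fun s => u x s) t - (ρ x)⁻¹ * lap (fun y => u y t ^ m) x - u x t ^ p ≤ 0 := by
  have hm1 : 1 < m := hp.trans hpm
  have hm0 : (0:ℝ) < m - 1 := by linarith
  set γ := 1 / (m-1) with hγdef
  have hγ : 0 < γ := by positivity
  have hγm : γ * (m-1) = 1 := by rw [hγdef]; field_simp
  have hαγ : α < γ := hα'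
  have hαm : α * (m-1) < 1 := by
    calc α * (m-1) < γ * (m-1) := by nlinarith
    _ = 1 := hγm
  have hβpos : 0 < β := by rw [hβ]; nlinarith
  have hN2 : (0:ℝ) < (N:ℝ) - 2 := by
    have : (3:ℝ) ≤ (N:ℝ) := by exact_mod_cast hN
    linarith
  have hk2 : 0 < k2 := lt_of_lt_of_le hk1 hk12
  set θ := (α*(p-1)+1-β)/β with hθdef
  have hqβ : β < α*(p-1)+1 := by
    have h2 : 0 < α*(p-1) := mul_pos hα (by linarith)
    rw [hβ]; nlinarith
  have hθpos : 0 < θ := div_pos (by linarith) hβpos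
  have hβθ : β*θ = α*(p-1)+1-β := by
    rw [hθdef]; field_simp
  have hσθ : γ*(p-1) ≤ θ := by
    rw [hθdef, le_div_iff₀ hβpos]
    have hkey : (γ-α)*(p-1) ≤ (γ-α)*(m-1) :=
      mul_le_mul_of_nonneg_left (by linarith) (by linarith)
    have e1 : γ*(p-1)*β = (p-1)*(α+γ)/2 := by
      rw [hβ]; linear_combination ((p-1)*α/2) * hγm
    rw [e1, hβ]; nlinarith
  have hγβ : γ*β = (α+γ)/2 := by
    rw [hβ]; linear_combination (α/2) * hγm
  have hαγβ : α ≤ γ*β := by rw [hγβ]; linarith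
  -- constants
  set R : ℝ := γ*k1/(2*k2*((N:ℝ)-2)) with hRdef
  have hR : 0 < R := by positivity
  set Y : ℝ := R^θ / (2*(γ+1)*k2*((N:ℝ)-2)) with hYdef
  have hY : 0 < Y := by positivity
  set X : ℝ := Y^(1/(m-p)) with hXdef
  have hX : 0 < X := by positivity
  set c0 : ℝ := min 1 X with hc0def
  have hc0 : 0 < c0 := lt_min one_pos hX
  have hc01 : c0 ≤ 1 := min_le_left _ _
  have hc0X : c0 ≤ X := min_le_right _ _
  set δ : ℝ := min 1 (c0^(m-1)*(γ+1)*k1/(2*β)) with hδdef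
  have hδ : 0 < δ := lt_min one_pos (by positivity)
  have hδ2 : δ ≤ c0^(m-1)*(γ+1)*k1/(2*β) := min_le_right _ _
  set a : ℝ := δ^β with hadef
  have ha : 0 < a := Real.rpow_pos_of_pos hδ β
  set C : ℝ := c0 * δ^α with hCdef
  have hC : 0 < C := by positivity
  set D : ℝ := C^(m-1)*(γ+1)*γ*k1/(a*a) with hDdef
  set Kb : ℝ := C^(m-1)*(γ+1)*k2*((N:ℝ)-2)/a with hKbdef
  have hKb : 0 < Kb := by positivity
  have hD : 0 < D := by positivity
  -- rpow expansions
  have hCm1 : C^(m-1) = c0^(m-1) * δ^(α*(m-1)) := by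
    rw [hCdef, Real.mul_rpow hc0.le (Real.rpow_nonneg hδ.le α), ← Real.rpow_mul hδ.le]
  have haa : a*a = δ^(α*(m-1)) * δ := by
    rw [hadef, ← Real.rpow_add hδ, ← Real.rpow_add_one hδ.ne' (α*(m-1))]
    congr 1
    rw [hβ]; ring
  -- condition (i)
  have hi : 2*(γ*β) ≤ D := by
    have h1 : δ * (2*β) ≤ c0^(m-1)*(γ+1)*k1 := by
      rw [← le_div_iff₀ (by positivity)]
      exact hδ2
    have hδm : (0:ℝ) < δ^(α*(m-1)) := Real.rpow_pos_of_pos hδ _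
    rw [hDdef, hCm1, haa, le_div_iff₀ (by positivity)]
    calc 2*(γ*β) * (δ^(α*(m-1)) * δ) = γ * (δ*(2*β)) * δ^(α*(m-1)) := by ring
      _ ≤ γ * (c0^(m-1)*(γ+1)*k1) * δ^(α*(m-1)) := by
          apply mul_le_mul_of_nonneg_right _ hδm.le
          exact mul_le_mul_of_nonneg_left h1 hγ.le
      _ = c0^(m-1) * δ^(α*(m-1)) * (γ+1) * γ * k1 := by ring
  -- condition (ii)
  have hii : 2*Kb ≤ C^(p-1) * (R/a)^θ := by
    have hCp1 : C^(p-1) = c0^(p-1) * δ^(α*(p-1)) := by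
      rw [hCdef, Real.mul_rpow hc0.le (Real.rpow_nonneg hδ.le α), ← Real.rpow_mul hδ.le]
    have hRa : (R/a)^θ = R^θ / δ^(β*θ) := by
      rw [hadef, Real.div_rpow hR.le (Real.rpow_nonneg hδ.le β), ← Real.rpow_mul hδ.le]
    have hc0split : c0^(m-1) = c0^(p-1) * c0^(m-p) := by
      rw [← Real.rpow_add hc0]; congr 1; ring
    have hc0Y : c0^(m-p) ≤ Y := by
      have h1 : c0^(m-p) ≤ X^(m-p) := Real.rpow_le_rpow hc0.le hc0X (by linarith)
      have h2 : X^(m-p) = Y := by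
        rw [hXdef, ← Real.rpow_mul hY.le, one_div, inv_mul_cancel₀ (by linarith : m - p ≠ 0),
          Real.rpow_one]
      linarith [h1, h2.le]
    have hδe1 : δ^(α*(m-1)) / δ^β = δ^(β-1) := by
      rw [← Real.rpow_sub hδ]; congr 1; rw [hβ]; ring
    have hδe2 : δ^(α*(p-1)) / δ^(β*θ) = δ^(β-1) := by
      rw [← Real.rpow_sub hδ]; congr 1; rw [hβθ]; ring
    have hδb : (0:ℝ) < δ^(β-1) := Real.rpow_pos_of_pos hδ _
    have key : 2*(c0^(m-1)*(γ+1)*k2*((N:ℝ)-2)) ≤ c0^(p-1) * R^θ := by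
      rw [hc0split]
      have h3 : c0^(m-p) * (2*((γ+1)*k2*((N:ℝ)-2))) ≤ R^θ := by
        have hs3 := mul_le_mul_of_nonneg_right hc0Y
          (by positivity : (0:ℝ) ≤ 2*((γ+1)*k2*((N:ℝ)-2)))
        calc c0^(m-p) * (2*((γ+1)*k2*((N:ℝ)-2))) ≤ Y * (2*((γ+1)*k2*((N:ℝ)-2))) := hs3
          _ = R^θ := by rw [hYdef]; field_simp
      calc 2*(c0^(p-1)*c0^(m-p)*(γ+1)*k2*((N:ℝ)-2))
          = c0^(p-1) * (c0^(m-p) * (2*((γ+1)*k2*((N:ℝ)-2)))) := by ring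
        _ ≤ c0^(p-1) * R^θ := by
            apply mul_le_mul_of_nonneg_left h3 (by positivity)
    calc 2*Kb = 2*(c0^(m-1)*(γ+1)*k2*((N:ℝ)-2)) * δ^(β-1) := by
          rw [hKbdef, hCm1, hadef, ← hδe1]; ring
      _ ≤ c0^(p-1) * R^θ * δ^(β-1) := mul_le_mul_of_nonneg_right key hδb.le
      _ = C^(p-1) * (R/a)^θ := by rw [hCp1, hRa, ← hδe2]; ring
  clear_value γ θ R Y X c0 δ a C D Kb
  have hDKb : D = 2*Kb*(R/a) := by
    rw [hDdef, hKbdef, hRdef]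
    field_simp
  -- core scalar inequality
  have core : ∀ s Fv : ℝ, 0 < s → 0 < Fv → Fv < 1 →
      α*Fv + γ*β*(1-Fv) + Kb*(Fv*s^β) ≤ D + C^(p-1) * (s^(α*(p-1)+1) * Fv^(γ*(p-1)+1)) := by
    intro s Fv hs hFv hFv1
    have habs : α*Fv + γ*β*(1-Fv) ≤ γ*β := by
      linarith [mul_le_mul_of_nonneg_right hαγβ hFv.le]
    have hrhs : 0 ≤ C^(p-1) * (s^(α*(p-1)+1) * Fv^(γ*(p-1)+1)) :=
      mul_nonneg (Real.rpow_nonneg hC.le _)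
        (mul_nonneg (Real.rpow_nonneg hs.le _) (Real.rpow_nonneg hFv.le _))
    rcases le_or_gt (Kb*(Fv*s^β)) (D/2) with hcase | hcase
    · linarith
    · have hFs : 0 < Fv*s^β := mul_pos hFv (Real.rpow_pos_of_pos hs β)
      have hRaFv : R/a < Fv*s^β := by
        rw [hDKb] at hcase
        exact lt_of_mul_lt_mul_left (by linarith) hKb.le
      have hRa0 : 0 ≤ R/a := div_nonneg hR.le ha.le
      have h2 : (R/a)/Fv < s^β := by
        rw [div_lt_iff₀ hFv]
        linarith [hRaFv]
      have t1 : (R/a)^θ ≤ s^(β*θ) * Fv^θ := by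
        have h3 : ((R/a)/Fv)^θ ≤ (s^β)^θ :=
          Real.rpow_le_rpow (div_nonneg hRa0 hFv.le) h2.le hθpos.le
        rw [Real.div_rpow hRa0 hFv.le, ← Real.rpow_mul hs.le] at h3
        rw [div_le_iff₀ (Real.rpow_pos_of_pos hFv θ)] at h3
        exact h3
      have hsplit : s^(α*(p-1)+1) = s^(β*θ) * s^β := by
        rw [← Real.rpow_add hs]; congr 1; rw [hβθ]; ring
      have hFsplit : Fv^(θ+1) ≤ Fv^(γ*(p-1)+1) :=
        Real.rpow_le_rpow_of_exponent_ge hFv hFv1.le (by linarith)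
      have hFθ1 : Fv^(θ+1) = Fv^θ * Fv := by rw [Real.rpow_add hFv, Real.rpow_one]
      have hchain : 2*Kb*(Fv*s^β) ≤ C^(p-1) * (s^(α*(p-1)+1) * Fv^(γ*(p-1)+1)) := by
        calc 2*Kb*(Fv*s^β) ≤ C^(p-1)*(R/a)^θ*(Fv*s^β) :=
              mul_le_mul_of_nonneg_right hii hFs.le
          _ ≤ C^(p-1)*(s^(β*θ)*Fv^θ)*(Fv*s^β) := by
              apply mul_le_mul_of_nonneg_right _ hFs.le
              exact mul_le_mul_of_nonneg_left t1 (Real.rpow_nonneg hC.le _)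
          _ = C^(p-1)*(s^(α*(p-1)+1) * Fv^(θ+1)) := by rw [hsplit, hFθ1]; ring
          _ ≤ C^(p-1)*(s^(α*(p-1)+1) * Fv^(γ*(p-1)+1)) := by
              apply mul_le_mul_of_nonneg_left _ (Real.rpow_nonneg hC.le _)
              exact mul_le_mul_of_nonneg_left hFsplit (Real.rpow_nonneg hs.le _)
      have hγβKb : γ*β ≤ Kb*(Fv*s^β) := by
        rw [hDKb] at hi
        linarith [mul_le_mul_of_nonneg_left hRaFv.le hKb.le]
      linarith
  -- provide the constants
  refine ⟨C, hC, a, ha, ?_⟩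
  intro T hT F u x t hx ht hF0 hF1
  simp only [u, F] at hF0 hF1 ⊢
  have hs : 0 < T + t := by linarith
  have hrx : 0 < ‖x‖ := lt_trans (Real.exp_pos 1) hx
  set Fv : ℝ := 1 - Real.log ‖x‖ * (T+t)^(-β)/a with hFvdef
  have hFvpos : 0 < Fv := hF0
  have hFv1 : Fv < 1 := hF1
  have hFne : Fv ≠ 0 := ne_of_gt hFvpos
  -- time derivative
  have hTd : HasDerivAt (fun s' : ℝ => T + s') 1 t := by
    simpa using (hasDerivAt_id t).const_add T
  have hpow1 : HasDerivAt (fun s' : ℝ => (T+s')^α) (1*α*(T+t)^(α-1)) t :=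
    hTd.rpow_const (p := α) (Or.inl hs.ne')
  have hpow2 : HasDerivAt (fun s' : ℝ => (T+s')^(-β)) (1*(-β)*(T+t)^(-β-1)) t :=
    hTd.rpow_const (p := -β) (Or.inl hs.ne')
  have hFd : HasDerivAt (fun s' : ℝ => 1 - Real.log ‖x‖ * (T+s')^(-β)/a)
      (0 - Real.log ‖x‖ * (1*(-β)*(T+t)^(-β-1))/a) t :=
    (hasDerivAt_const t (1:ℝ)).sub ((hpow2.const_mul (Real.log ‖x‖)).div_const a)
  have hFp := hFd.rpow_const (p := γ) (Or.inl hFne)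
  have hud := (hpow1.const_mul C).mul hFp
  have hderiv_val : deriv (fun s => C * (T + s) ^ α * (1 - Real.log ‖x‖ * (T + s) ^ (-β) / a) ^ γ) t
      = C*(T+t)^(α-1)*Fv^(γ-1)*(α*Fv + γ*β*(1-Fv)) := by
    rw [show deriv (fun s => C * (T + s) ^ α * (1 - Real.log ‖x‖ * (T + s) ^ (-β) / a) ^ γ) t = _ from hud.deriv, hFvdef]
    have i2 : (T+t)^(α-1) * (T+t) = (T+t)^α := by
      rw [← Real.rpow_add_one hs.ne' (α-1)]; congr 1; ring
    have i3 : (T+t)^(-β-1) = (T+t)^(-β) * (T+t)⁻¹ := by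
      rw [show -β-1 = -β + (-1) by ring, Real.rpow_add hs, Real.rpow_neg_one]
    have i4 : (1 - Real.log ‖x‖ * (T+t)^(-β)/a)^(γ-1) * (1 - Real.log ‖x‖ * (T+t)^(-β)/a)
        = (1 - Real.log ‖x‖ * (T+t)^(-β)/a)^γ := by
      rw [← Real.rpow_add_one hFne (γ-1)]; congr 1; ring
    rw [← i2, i3, ← i4]
    field_simp
    ring
  -- spatial part
  have hKpos : 0 < C^m * (T+t)^(α*m) :=
    mul_pos (Real.rpow_pos_of_pos hC m) (Real.rpow_pos_of_pos hs (α*m))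
  have hκ : 0 < (T+t)^(-β)/a := div_pos (Real.rpow_pos_of_pos hs _) ha
  have hFcont : ContinuousAt
      (fun y : EuclideanSpace ℝ (Fin N) => 1 - Real.log ‖y‖ * (T+t)^(-β)/a) x := by
    have h1 : ContinuousAt (fun y : EuclideanSpace ℝ (Fin N) => Real.log ‖y‖) x :=
      (Real.continuousAt_log hrx.ne').comp continuous_norm.continuousAt
    exact continuousAt_const.sub ((h1.mul continuousAt_const).div_const a)
  have hx0 : (0:ℝ) < 1 - Real.log ‖x‖ * (T+t)^(-β)/a := by rw [← hFvdef]; exact hFvpos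
  have hev0 : ∀ᶠ y in nhds x, 0 < 1 - Real.log ‖y‖ * (T+t)^(-β)/a :=
    hFcont.eventually (eventually_gt_nhds hx0)
  have hev : (fun y => (C * (T + t)^α * (1 - Real.log ‖y‖ * (T + t)^(-β)/a)^γ)^m)
      =ᶠ[nhds x] (fun y => (C^m * (T+t)^(α*m)) * (1 - (T+t)^(-β)/a * Real.log ‖y‖)^(γ*m)) := by
    filter_upwards [hev0] with y hy
    have hyb : (0:ℝ) ≤ 1 - Real.log ‖y‖ * (T+t)^(-β)/a := le_of_lt hy
    have e1 : (1:ℝ) - (T+t)^(-β)/a * Real.log ‖y‖ = 1 - Real.log ‖y‖ * (T+t)^(-β)/a := by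
      ring
    rw [e1, Real.mul_rpow (mul_nonneg hC.le (Real.rpow_nonneg hs.le α)) (Real.rpow_nonneg hyb γ),
      Real.mul_rpow hC.le (Real.rpow_nonneg hs.le α), ← Real.rpow_mul hs.le,
      ← Real.rpow_mul hyb]
  have hBne' : 1 - (T+t)^(-β)/a * Real.log ‖x‖ ≠ 0 := by
    have hh : (1:ℝ) - (T+t)^(-β)/a * Real.log ‖x‖ = Fv := by rw [hFvdef]; ring
    rw [hh]; exact hFne
  have hlap1 : lap (fun y => (C * (T + t)^α * (1 - Real.log ‖y‖ * (T + t)^(-β)/a)^γ)^m) x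
      = (C^m*(T+t)^(α*m)) * (γ*m) * ((T+t)^(-β)/a) / ‖x‖^2 *
        (((T+t)^(-β)/a) * (γ*m-1) * (1 - (T+t)^(-β)/a * Real.log ‖x‖)^(γ*m-2)
          - ((N:ℝ)-2) * (1 - (T+t)^(-β)/a * Real.log ‖x‖)^(γ*m-1)) :=
    (lap_congr' hev).trans (lap_log (C^m*(T+t)^(α*m)) ((T+t)^(-β)/a) (γ*m) x hrx hBne')
  have hgm2 : γ*m - 2 = γ - 1 := by linear_combination hγm
  have hgm1 : γ*m - 1 = γ := by linear_combination hγm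
  have hbase : (1:ℝ) - (T+t)^(-β)/a * Real.log ‖x‖ = Fv := by rw [hFvdef]; ring
  rw [hgm2, hgm1, hbase] at hlap1
  set P : ℝ := (C^m*(T+t)^(α*m)) * (γ+1) * ((T+t)^(-β)/a) * (((T+t)^(-β)/a) * γ * Fv^(γ-1))
    with hPdef
  set Q : ℝ := (C^m*(T+t)^(α*m)) * (γ+1) * ((T+t)^(-β)/a) * (((N:ℝ)-2) * Fv^γ) with hQdef
  have hlapPQ : lap (fun y => (C * (T + t)^α * (1 - Real.log ‖y‖ * (T + t)^(-β)/a)^γ)^m) x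
      = (P - Q)/‖x‖^2 := by
    rw [hlap1, hPdef, hQdef]
    have hgm : γ*m = γ+1 := by linear_combination hγm
    rw [hgm]
    ring
  have hP0 : 0 ≤ P := by
    rw [hPdef]
    exact mul_nonneg (mul_nonneg (mul_nonneg hKpos.le (by linarith)) hκ.le)
      (mul_nonneg (mul_nonneg hκ.le hγ.le) (Real.rpow_nonneg hFvpos.le _))
  have hQ0 : 0 ≤ Q := by
    rw [hQdef]
    exact mul_nonneg (mul_nonneg (mul_nonneg hKpos.le (by linarith)) hκ.le)
      (mul_nonneg hN2.le (Real.rpow_nonneg hFvpos.le _))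
  obtain ⟨hρa, hρb⟩ := hout x hx.le
  have hr2 : (0:ℝ) < ‖x‖^2 := by positivity
  have hbd : k1*P - k2*Q ≤ (ρ x)⁻¹ * ((P-Q)/‖x‖^2) := by
    have h1 : k1*‖x‖^2*P ≤ (ρ x)⁻¹*P := mul_le_mul_of_nonneg_right hρa hP0
    have h2 : (ρ x)⁻¹*Q ≤ k2*‖x‖^2*Q := mul_le_mul_of_nonneg_right hρb hQ0
    have h3 : (ρ x)⁻¹ * ((P-Q)/‖x‖^2) = ((ρ x)⁻¹*P - (ρ x)⁻¹*Q)/‖x‖^2 := by ring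
    have h4 : k1*P - k2*Q = (k1*‖x‖^2*P - k2*‖x‖^2*Q)/‖x‖^2 := by
      rw [eq_div_iff hr2.ne']; ring
    rw [h3, h4]
    exact (div_le_div_iff_of_pos_right hr2).mpr (by linarith)
  -- rpow bookkeeping identities
  have hCm : C^(m-1)*C = C^m := by
    rw [← Real.rpow_add_one hC.ne' (m-1)]; congr 1; ring
  have hCp : C^(p-1)*C = C^p := by
    rw [← Real.rpow_add_one hC.ne' (p-1)]; congr 1; ring
  have hSb : 0 < (T+t)^β := Real.rpow_pos_of_pos hs β
  have hsβinv : (T+t)^(-β) = ((T+t)^β)⁻¹ := by rw [Real.rpow_neg hs.le]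
  have hsm : (T+t)^(α-1) * ((T+t)^β * (T+t)^β) = (T+t)^(α*m) := by
    rw [← Real.rpow_add hs, ← Real.rpow_add hs]; congr 1; rw [hβ]; ring
  have hsp : (T+t)^(α-1) * (T+t)^(α*(p-1)+1) = (T+t)^(α*p) := by
    rw [← Real.rpow_add hs]; congr 1; ring
  have hFγ : Fv^(γ-1)*Fv = Fv^γ := by
    rw [← Real.rpow_add_one hFne (γ-1)]; congr 1; ring
  have hFp2 : Fv^(γ-1)*Fv^(γ*(p-1)+1) = Fv^(γ*p) := by
    rw [← Real.rpow_add hFvpos]; congr 1; ring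
  have hPid : C*(T+t)^(α-1)*Fv^(γ-1)*D = k1*P := by
    rw [hDdef, hPdef, ← hCm, ← hsm, hsβinv]
    field_simp
  have hQid : C*(T+t)^(α-1)*Fv^(γ-1)*(Kb*(Fv*(T+t)^β)) = k2*Q := by
    rw [hKbdef, hQdef, ← hCm, ← hsm, hsβinv, ← hFγ]
    field_simp
  have hupid : (C * (T+t)^α * Fv^γ)^p
      = C*(T+t)^(α-1)*Fv^(γ-1)*(C^(p-1)*((T+t)^(α*(p-1)+1) * Fv^(γ*(p-1)+1))) := by
    rw [Real.mul_rpow (mul_nonneg hC.le (Real.rpow_nonneg hs.le α)) (Real.rpow_nonneg hFvpos.le γ),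
      Real.mul_rpow hC.le (Real.rpow_nonneg hs.le α), ← Real.rpow_mul hs.le,
      ← Real.rpow_mul hFvpos.le, ← hCp, ← hsp, ← hFp2]
    ring
  have hcore := core (T+t) Fv hs hFvpos hFv1
  have hZ : 0 ≤ C*(T+t)^(α-1)*Fv^(γ-1) :=
    mul_nonneg (mul_nonneg hC.le (Real.rpow_nonneg hs.le _)) (Real.rpow_nonneg hFvpos.le _)
  have hfinal : C*(T+t)^(α-1)*Fv^(γ-1)*(α*Fv + γ*β*(1-Fv)) - (k1*P - k2*Q)
      - (C * (T+t)^α * Fv^γ)^p ≤ 0 := by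
    rw [← hPid, ← hQid, hupid]
    have heq : C*(T+t)^(α-1)*Fv^(γ-1)*(α*Fv + γ*β*(1-Fv))
        - (C*(T+t)^(α-1)*Fv^(γ-1)*D - C*(T+t)^(α-1)*Fv^(γ-1)*(Kb*(Fv*(T+t)^β)))
        - C*(T+t)^(α-1)*Fv^(γ-1)*(C^(p-1)*((T+t)^(α*(p-1)+1) * Fv^(γ*(p-1)+1)))
        = C*(T+t)^(α-1)*Fv^(γ-1) * ((α*Fv + γ*β*(1-Fv)) + Kb*(Fv*(T+t)^β)
            - D - C^(p-1)*((T+t)^(α*(p-1)+1) * Fv^(γ*(p-1)+1))) := by ring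
    rw [heq]
    calc C*(T+t)^(α-1)*Fv^(γ-1) * ((α*Fv + γ*β*(1-Fv)) + Kb*(Fv*(T+t)^β)
            - D - C^(p-1)*((T+t)^(α*(p-1)+1) * Fv^(γ*(p-1)+1)))
        ≤ C*(T+t)^(α-1)*Fv^(γ-1) * 0 := mul_le_mul_of_nonneg_left (by linarith) hZ
      _ = 0 := by ring
  clear_value Fv P Q
  rw [hderiv_val, hlapPQ]
  linarith [hbd, hfinal]
end

section
/- Let N ≥ 3, 1 < p < m, and let ρ : ℝ^N → ℝ be strictly positive with ρ1 ≤ 1/ρ(x) ≤ ρ2 for all |x| ≤ e, where ρ2 ≥ ρ1 > 0. Let α ∈ (0, 1/(m−1)) and β := (α(m−1)+1)/2. Then there exist constants C > 0 and a > 0 (depending only on m, p, N, α, ρ1, ρ2) such that for every T > 0 with 0 < T^{−β} < a/2, the function v(x,t) := C (T+t)^{α} G(x,t)^{1/(m−1)}, where G(x,t) := 1 − ((|x|^2 + e^2)/(2e^2)) (T+t)^{−β}/a, satisfies 1/2 < G(x,t) < 1 and the pointwise differential inequality ∂_t v(x,t) − ρ(x)^{−1} Δ_x (v^m)(x,t)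 − v(x,t)^p ≤ 0 at every point (x,t) with |x| < e and t > 0. -/
open MeasureTheory

lemma aux_d2 (κ A B u d r : ℝ) (hpos : 0 < A - B * u) :
    deriv (deriv fun τ : ℝ => κ * (A - B * (u + 2*d*τ + τ^2)) ^ r) 0
      = κ*r*(A-B*u)^(r-1)*(-2*B) + κ*r*(r-1)*(A-B*u)^(r-2)*(4*B^2*d^2) := by
  have hQ : ∀ τ : ℝ, HasDerivAt (fun σ : ℝ => A - B*(u + 2*d*σ + σ^2)) (-(B*(2*d + 2*τ))) τ := by
    intro τ
    have h1 : HasDerivAt (fun σ : ℝ => σ^2) (2*τ) τ := by simpa using hasDerivAt_pow 2 τ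
    have h2 : HasDerivAt (fun σ : ℝ => u + 2*d*σ) (2*d) τ := by
      simpa using ((hasDerivAt_id τ).const_mul (2*d)).const_add u
    exact ((h2.add h1).const_mul B).const_sub A
  have hev : ∀ᶠ τ in nhds (0:ℝ), 0 < A - B*(u + 2*d*τ + τ^2) := by
    have hc : Continuous fun τ : ℝ => A - B*(u + 2*d*τ + τ^2) := by continuity
    have h0 : (0:ℝ) < A - B*(u + 2*d*0 + 0^2) := by simpa using hpos
    exact hc.continuousAt.eventually_mem (Ioi_mem_nhds h0) |>.mono (fun τ hτ => hτ)
  have hD1ev : deriv (fun τ : ℝ => κ * (A - B * (u + 2*d*τ + τ^2)) ^ r)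
      =ᶠ[nhds 0] fun τ => κ * ((-(B*(2*d + 2*τ))) * r * (A - B*(u + 2*d*τ + τ^2)) ^ (r-1)) := by
    filter_upwards [hev] with τ hτ
    exact (((hQ τ).rpow_const (Or.inl hτ.ne')).const_mul κ).deriv
  rw [hD1ev.deriv_eq]
  have hlin : HasDerivAt (fun τ : ℝ => -(B*(2*d + 2*τ))) (-(B*2)) 0 := by
    have : HasDerivAt (fun τ : ℝ => 2*d + 2*τ) 2 0 := by
      simpa using ((hasDerivAt_id (0:ℝ)).const_mul 2).const_add (2*d)
    exact (this.const_mul B).neg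
  have hpow : HasDerivAt (fun τ : ℝ => (A - B*(u + 2*d*τ + τ^2)) ^ (r-1))
      ((-(B*(2*d + 2*0))) * (r-1) * (A - B*(u + 2*d*0 + 0^2)) ^ (r-1-1)) 0 := by
    refine (hQ 0).rpow_const (Or.inl ?_)
    simpa using hpos.ne'
  have htot := ((hlin.mul_const r).mul hpow).const_mul κ
  rw [HasDerivAt.deriv (f := fun τ : ℝ => κ * (-(B*(2*d + 2*τ)) * r * (A - B*(u + 2*d*τ + τ^2)) ^ (r-1))) htot]
  have h21 : r-1-1 = r-2 := by ring
  rw [h21]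
  norm_num
  ring

lemma mul3_le (w1 w2 w3 z1 z2 z3 Pc : ℝ) (hPc : 0 ≤ Pc) (h1 : w1 ≤ z1) (h2 : w2 ≤ z2)
    (h3 : w3 ≤ z3) (hw2 : 0 ≤ w2) (hw3 : 0 ≤ w3) (hz1 : 0 ≤ z1) (hz2 : 0 ≤ z2) :
    w1*w2*w3*Pc ≤ z1*z2*z3*Pc := by
  have ha : w1*w2 ≤ z1*z2 := mul_le_mul h1 h2 hw2 hz1
  have hb : w1*w2*w3 ≤ z1*z2*z3 :=
    mul_le_mul ha h3 hw3 (mul_nonneg hz1 hz2)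
  exact mul_le_mul_of_nonneg_right hb hPc


set_option maxHeartbeats 1000000 in
/-- Subsolution estimate in the inner ball: with
`G(x,t) = 1 - ((|x|² + e²)/(2e²)) (T+t)^{-β}/a` and `v(x,t) = C (T+t)^α G(x,t)^{1/(m-1)}`,
there are `C, a > 0` such that for every `T > 0` with `T^{-β} < a/2`, at every point with
`|x| < e` and `t > 0` one has `1/2 < G < 1` and `∂_t v - ρ⁻¹ Δ(v^m) - v^p ≤ 0`. -/
theorem inner_subsolution
    (N : ℕ) (hN : 3 ≤ N) (m p : ℝ) (hp : 1 < p) (hpm : p < m)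
    (ρ : EuclideanSpace ℝ (Fin N) → ℝ) (hρpos : ∀ x, 0 < ρ x)
    (ρ1 ρ2 : ℝ) (hρ1 : 0 < ρ1) (hρ12 : ρ1 ≤ ρ2)
    (hin : ∀ x : EuclideanSpace ℝ (Fin N), ‖x‖ ≤ Real.exp 1 →
      ρ1 ≤ (ρ x)⁻¹ ∧ (ρ x)⁻¹ ≤ ρ2)
    (α β : ℝ) (hα : 0 < α) (hα' : α < 1 / (m - 1)) (hβ : β = (α * (m - 1) + 1) / 2) :
    ∃ C : ℝ, 0 < C ∧ ∃ a : ℝ, 0 < a ∧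
      ∀ T : ℝ, 0 < T → T ^ (-β) < a / 2 →
        let G : EuclideanSpace ℝ (Fin N) → ℝ → ℝ :=
          fun y s => 1 - (‖y‖ ^ 2 + Real.exp 1 ^ 2) / (2 * Real.exp 1 ^ 2) * (T + s) ^ (-β) / a
        let v : EuclideanSpace ℝ (Fin N) → ℝ → ℝ :=
          fun y s => C * (T + s) ^ α * G y s ^ (1 / (m - 1))
        ∀ (x : EuclideanSpace ℝ (Fin N)) (t : ℝ),
          ‖x‖ < Real.exp 1 → 0 < t →
          (1 / 2 < G x t ∧ G x t < 1) ∧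
          deriv (fun s => v x s) t - (ρ x)⁻¹ * lap (fun y => v y t ^ m) x - v x t ^ p ≤ 0 := by
  have hm1 : (0:ℝ) < m - 1 := by linarith
  have hp1 : (0:ℝ) < p - 1 := by linarith
  have hmp : (0:ℝ) < m - p := by linarith
  have hm0 : (0:ℝ) < m := by linarith
  set q : ℝ := 1 / (m - 1) with hqdef
  have hq : 0 < q := by rw [hqdef]; positivity
  have hαm : α * (m - 1) < 1 := by
    rw [lt_div_iff₀ hm1] at hα'; linarith
  have hβ0 : 0 < β := by rw [hβ]; nlinarith
  set r : ℝ := q * m with hrdef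
  have hr0 : 0 < r := by rw [hrdef]; positivity
  have hr1 : 1 < r := by
    have : r = m / (m-1) := by rw [hrdef, hqdef]; ring
    rw [this, lt_div_iff₀ hm1]; linarith
  have hN3 : (3:ℝ) ≤ (N:ℝ) := by exact_mod_cast hN
  have hN0 : (0:ℝ) < (N:ℝ) := by linarith
  have hρ2 : 0 < ρ2 := lt_of_lt_of_le hρ1 hρ12
  set W0 : ℝ := ((1:ℝ)/2) ^ (q*p) with hW0def
  have hW0 : 0 < W0 := Real.rpow_pos_of_pos (by norm_num) _
  set KB : ℝ := W0 / (4*ρ2*(N:ℝ)*r) with hKBdef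
  have hKB : 0 < KB := by rw [hKBdef]; positivity
  set L0 : ℝ := (2*KB) ^ ((m-p)⁻¹) with hL0def
  have hL0 : 0 < L0 := by rw [hL0def]; positivity
  set s₀ : ℝ := max ((α+q*β)/((W0/2)*L0^(p-1))) 1 with hs₀def
  have hs₀1 : (1:ℝ) ≤ s₀ := le_max_right _ _
  have hs₀ : 0 < s₀ := by linarith
  have hδ2 : 0 < α*p - (α*m - β) := by
    rw [hβ]; nlinarith [mul_pos hα hp1]
  have hδ1pos : (0:ℝ) ≤ α*(p-1)+1 := by nlinarith [mul_pos hα hp1]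
  set C : ℝ := L0 * s₀^(-α) with hCdef
  set a : ℝ := 2*s₀^(-β) with hadef
  have hC : 0 < C := by
    rw [hCdef]; exact mul_pos hL0 (Real.rpow_pos_of_pos hs₀ _)
  have ha : 0 < a := by
    rw [hadef]; exact mul_pos two_pos (Real.rpow_pos_of_pos hs₀ _)
  have hCmp : C ^ (m-p) = 2*KB*s₀^(-α*(m-p)) := by
    rw [hCdef, Real.mul_rpow hL0.le (Real.rpow_nonneg hs₀.le _), hL0def,
        ← Real.rpow_mul (by positivity : (0:ℝ) ≤ 2*KB), inv_mul_cancel₀ hmp.ne',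
        Real.rpow_one, ← Real.rpow_mul hs₀.le]
  have hCpp : C ^ (p-1) = L0^(p-1) * s₀^(-α*(p-1)) := by
    rw [hCdef, Real.mul_rpow hL0.le (Real.rpow_nonneg hs₀.le _), ← Real.rpow_mul hs₀.le]
  have hW2L : 0 < (W0/2)*L0^(p-1) := by
    apply mul_pos (by linarith) (Real.rpow_pos_of_pos hL0 _)
  have hs₀ge : (α+q*β) ≤ (W0/2)*L0^(p-1) * s₀ := by
    have h1 : (α+q*β)/((W0/2)*L0^(p-1)) ≤ s₀ := le_max_left _ _
    calc α+q*β = ((α+q*β)/((W0/2)*L0^(p-1))) * ((W0/2)*L0^(p-1)) := by field_simp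
    _ ≤ s₀ * ((W0/2)*L0^(p-1)) := mul_le_mul_of_nonneg_right h1 hW2L.le
    _ = (W0/2)*L0^(p-1) * s₀ := by ring
  have hsplitp : C^p = C^(p-1)*C := by
    have h := Real.rpow_add hC (p-1) 1
    rw [Real.rpow_one] at h
    rw [show (p-1)+(1:ℝ) = p by ring] at h
    exact h
  have hsplitm : C^m = C^p * C^(m-p) := by
    have h := Real.rpow_add hC p (m-p)
    rw [show p+(m-p) = m by ring] at h
    exact h
  have hFA : C*(α+q*β) ≤ ((W0/2)*C^p)*s₀^(α*(p-1)+1) := by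
    have hss : s₀^(-α*(p-1)) * s₀^(α*(p-1)+1) = s₀ := by
      rw [← Real.rpow_add hs₀, show -α*(p-1)+(α*(p-1)+1) = 1 by ring, Real.rpow_one]
    have heq : ((W0/2)*C^p)*s₀^(α*(p-1)+1) = C*((W0/2)*L0^(p-1)*s₀) := by
      calc ((W0/2)*C^p)*s₀^(α*(p-1)+1)
          = (W0/2)*L0^(p-1)*C*(s₀^(-α*(p-1))*s₀^(α*(p-1)+1)) := by
            rw [hsplitp, hCpp]; ring
        _ = C*((W0/2)*L0^(p-1)*s₀) := by rw [hss]; ring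
    rw [heq]
    exact mul_le_mul_of_nonneg_left hs₀ge hC.le
  have hFB : 2*ρ2*(N:ℝ)*r*C^m/a ≤ ((W0/2)*C^p)*s₀^(α*p-(α*m-β)) := by
    have key : 2*ρ2*(N:ℝ)*r*C^m/a = ((W0/2)*C^p)*s₀^(α*p-(α*m-β)) := by
      rw [hsplitm, hCmp, hadef, hKBdef]
      rw [show α*p-(α*m-β) = -α*(m-p) - (-β) by ring, Real.rpow_sub hs₀]
      have h1 : s₀^(-β) ≠ 0 := (Real.rpow_pos_of_pos hs₀ _).ne'
      have h2 : ρ2*(N:ℝ)*r ≠ 0 := by positivity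
      field_simp
      ring
    exact key.le
  refine ⟨C, hC, a, ha, ?_⟩
  intro T hT hTa
  intro Gl vl x t hx ht
  unfold vl Gl
  set E : ℝ := Real.exp 1 ^ 2 with hEdef
  have hE1 : (1:ℝ) ≤ E := by
    rw [hEdef]
    have h1 : (1:ℝ) ≤ Real.exp 1 := Real.one_le_exp (by norm_num)
    calc (1:ℝ) = 1^2 := by norm_num
    _ ≤ Real.exp 1^2 := pow_le_pow_left₀ (by norm_num) h1 2
  have hE0 : (0:ℝ) < E := by linarith
  have hs : 0 < T + t := by linarith
  have hnegβ : -β < 0 := neg_lt_zero.mpr hβ0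
  have hTs₀ : s₀ < T := by
    have h2 : T^(-β) < s₀^(-β) := by rw [hadef] at hTa; linarith
    exact (Real.rpow_lt_rpow_iff_of_neg hT hs₀ hnegβ).mp h2
  have hss₀ : s₀ < T + t := by linarith
  have hsb : (T+t)^(-β) < s₀^(-β) := Real.rpow_lt_rpow_of_neg hs₀ hss₀ hnegβ
  have hsb2 : (T+t)^(-β) < a/2 := by rw [hadef]; linarith
  have hsbpos : 0 < (T+t)^(-β) := Real.rpow_pos_of_pos hs _
  set k0 : ℝ := (‖x‖^2+E)/(2*E) with hk0def
  have hxE : ‖x‖^2 < E := by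
    rw [hEdef]
    exact pow_lt_pow_left₀ hx (norm_nonneg x) two_ne_zero
  have hk0l : 1/2 ≤ k0 := by
    rw [hk0def, le_div_iff₀ (by positivity : (0:ℝ) < 2*E)]
    linarith [sq_nonneg ‖x‖]
  have hk0u : k0 < 1 := by
    rw [hk0def, div_lt_one (by positivity : (0:ℝ) < 2*E)]; linarith
  have hk0pos : 0 < k0 := by linarith
  set Gx : ℝ := 1 - k0*(T+t)^(-β)/a with hGxdef
  have h1G : k0*(T+t)^(-β)/a < 1/2 := by
    rw [div_lt_iff₀ ha]
    have hh : k0*(T+t)^(-β) < 1*(T+t)^(-β) := mul_lt_mul_of_pos_right hk0u hsbpos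
    linarith
  have hGpos2 : 0 < k0*(T+t)^(-β)/a := by
    apply div_pos (mul_pos hk0pos hsbpos) ha
  have hGl : 1/2 < Gx := by rw [hGxdef]; linarith
  have hGu : Gx < 1 := by rw [hGxdef]; linarith
  have hGpos : 0 < Gx := lt_trans one_half_pos hGl
  refine ⟨⟨hGl, hGu⟩, ?_⟩
  -- time derivative
  have hd1 : HasDerivAt (fun s : ℝ => T + s) 1 t := by
    simpa using (hasDerivAt_id t).const_add T
  have hd2 : HasDerivAt (fun s : ℝ => (T+s)^α) (1*α*(T+t)^(α-1)) t :=
    hd1.rpow_const (Or.inl hs.ne')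
  have hd3 : HasDerivAt (fun s : ℝ => (T+s)^(-β)) (1*(-β)*(T+t)^(-β-1)) t :=
    hd1.rpow_const (Or.inl hs.ne')
  have hd4 : HasDerivAt (fun s : ℝ => 1 - k0*(T+s)^(-β)/a)
      (-(k0*(1*(-β)*(T+t)^(-β-1))/a)) t :=
    ((hd3.const_mul k0).div_const a).const_sub 1
  have hGne : Gx ≠ 0 := hGpos.ne'
  have hd5 : HasDerivAt (fun s : ℝ => (1 - k0*(T+s)^(-β)/a)^q)
      ((-(k0*(1*(-β)*(T+t)^(-β-1))/a)) * q * Gx^(q-1)) t :=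
    hd4.rpow_const (Or.inl hGne)
  have hd6 := (hd2.const_mul C).mul hd5
  have hDt : deriv (fun s : ℝ => C*(T+s)^α*(1 - k0*(T+s)^(-β)/a)^q) t
      = (C*(1*α*(T+t)^(α-1))) * Gx^q
        + (C*(T+t)^α) * ((-(k0*(1*(-β)*(T+t)^(-β-1))/a)) * q * Gx^(q-1)) := hd6.deriv
  have hGq : Gx^q ≤ 1 := Real.rpow_le_one hGpos.le hGu.le hq.le
  have hGq1 : Gx^(q-1) ≤ 2 := by
    rw [Real.rpow_sub hGpos, Real.rpow_one]
    calc Gx^q/Gx ≤ 1/(1/2) := div_le_div₀ zero_le_one hGq one_half_pos hGl.le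
    _ = 2 := by norm_num
  have hGr1 : Gx^(r-1) ≤ 2 := by
    rw [Real.rpow_sub hGpos, Real.rpow_one]
    have hGr : Gx^r ≤ 1 := Real.rpow_le_one hGpos.le hGu.le hr0.le
    calc Gx^r/Gx ≤ 1/(1/2) := div_le_div₀ zero_le_one hGr one_half_pos hGl.le
    _ = 2 := by norm_num
  have hsα1 : (0:ℝ) ≤ (T+t)^(α-1) := (Real.rpow_pos_of_pos hs _).le
  have hterm1 : (C*(1*α*(T+t)^(α-1))) * Gx^q ≤ C*α*(T+t)^(α-1) := by
    have h0 : 0 ≤ C*(1*α*(T+t)^(α-1)) :=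
      mul_nonneg hC.le (mul_nonneg (by linarith : (0:ℝ) ≤ 1*α) hsα1)
    calc (C*(1*α*(T+t)^(α-1))) * Gx^q ≤ (C*(1*α*(T+t)^(α-1))) * 1 :=
          mul_le_mul_of_nonneg_left hGq h0
    _ = C*α*(T+t)^(α-1) := by ring
  have hss2 : (T+t)^α*(T+t)^(-β-1) = (T+t)^(α-1)*(T+t)^(-β) := by
    rw [← Real.rpow_add hs, ← Real.rpow_add hs]; ring_nf
  have hterm2 : (C*(T+t)^α) * ((-(k0*(1*(-β)*(T+t)^(-β-1))/a)) * q * Gx^(q-1))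
      ≤ C*(q*β)*(T+t)^(α-1) := by
    have he : (C*(T+t)^α) * ((-(k0*(1*(-β)*(T+t)^(-β-1))/a)) * q * Gx^(q-1))
        = (C*q*β*((T+t)^α*(T+t)^(-β-1)))*(Gx^(q-1)*(k0/a)) := by ring
    rw [he, hss2]
    have he2 : (C*q*β*((T+t)^(α-1)*(T+t)^(-β)))*(Gx^(q-1)*(k0/a))
        = (C*q*β*(T+t)^(α-1))*(Gx^(q-1)*(k0*(T+t)^(-β)/a)) := by ring
    rw [he2]
    have hb : Gx^(q-1)*(k0*(T+t)^(-β)/a) ≤ 2*(1/2) :=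
      mul_le_mul hGq1 h1G.le hGpos2.le (by norm_num)
    have h0 : 0 ≤ C*q*β*(T+t)^(α-1) :=
      mul_nonneg (mul_nonneg (mul_nonneg hC.le hq.le) hβ0.le) hsα1
    calc (C*q*β*(T+t)^(α-1))*(Gx^(q-1)*(k0*(T+t)^(-β)/a))
        ≤ (C*q*β*(T+t)^(α-1))*(2*(1/2)) := mul_le_mul_of_nonneg_left hb h0
    _ = C*(q*β)*(T+t)^(α-1) := by ring
  -- Laplacian
  set κ : ℝ := C^m*(T+t)^(α*m) with hκdef
  have hκ : 0 < κ := by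
    rw [hκdef]; exact mul_pos (Real.rpow_pos_of_pos hC _) (Real.rpow_pos_of_pos hs _)
  set B2 : ℝ := (T+t)^(-β)/(2*E*a) with hB2def
  have hB2 : 0 < B2 := by
    rw [hB2def]; exact div_pos hsbpos (mul_pos (mul_pos two_pos hE0) ha)
  set A2 : ℝ := 1 - E*B2 with hA2def
  have hEne : E ≠ 0 := hE0.ne'
  have hane : a ≠ 0 := ha.ne'
  have hGA : A2 - B2*‖x‖^2 = Gx := by
    rw [hA2def, hB2def, hGxdef, hk0def]
    field_simp
    ring
  have hpos0 : 0 < A2 - B2*‖x‖^2 := by rw [hGA]; exact hGpos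
  have hd2i : ∀ i : Fin N, deriv (deriv fun τ : ℝ =>
      (C*(T+t)^α*(1 - (‖x + τ • EuclideanSpace.single i (1:ℝ)‖^2+E)/(2*E)*(T+t)^(-β)/a)^q)^m) 0
      = κ*r*Gx^(r-1)*(-2*B2) + κ*r*(r-1)*Gx^(r-2)*(4*B2^2*(x i)^2) := by
    intro i
    have hnorm : ∀ τ : ℝ, ‖x + τ • EuclideanSpace.single i (1:ℝ)‖^2
        = ‖x‖^2 + 2*(x i)*τ + τ^2 := by
      intro τ
      rw [norm_add_sq_real, real_inner_smul_right, norm_smul]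
      simp [EuclideanSpace.inner_single_right, EuclideanSpace.norm_single, mul_pow, sq_abs]
      ring
    have hev : ∀ᶠ τ in nhds (0:ℝ), 0 < A2 - B2*(‖x‖^2 + 2*(x i)*τ + τ^2) := by
      have hc : Continuous fun τ : ℝ => A2 - B2*(‖x‖^2 + 2*(x i)*τ + τ^2) :=
        continuous_const.sub (continuous_const.mul
          ((continuous_const.add (continuous_const.mul continuous_id)).add (continuous_pow 2)))
      have h0 : (0:ℝ) < A2 - B2*(‖x‖^2 + 2*(x i)*0 + 0^2) := by simpa using hpos0
      exact hc.continuousAt.eventually_mem (Ioi_mem_nhds h0) |>.mono (fun τ hτ => hτ)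
    have heq : (fun τ : ℝ =>
        (C*(T+t)^α*(1 - (‖x + τ • EuclideanSpace.single i (1:ℝ)‖^2+E)/(2*E)*(T+t)^(-β)/a)^q)^m)
        =ᶠ[nhds 0] fun τ => κ*(A2 - B2*(‖x‖^2 + 2*(x i)*τ + τ^2))^r := by
      filter_upwards [hev] with τ hτ
      rw [hnorm τ]
      have hform : 1 - (‖x‖^2 + 2*(x i)*τ + τ^2+E)/(2*E)*(T+t)^(-β)/a
          = A2 - B2*(‖x‖^2 + 2*(x i)*τ + τ^2) := by
        rw [hA2def, hB2def]
        field_simp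
        ring
      rw [hform]
      rw [Real.mul_rpow (mul_nonneg hC.le (Real.rpow_nonneg hs.le α)) (Real.rpow_nonneg hτ.le q),
          Real.mul_rpow hC.le (Real.rpow_nonneg hs.le α),
          ← Real.rpow_mul hs.le, ← Real.rpow_mul hτ.le]
    rw [heq.deriv.deriv_eq]
    rw [aux_d2 κ A2 B2 (‖x‖^2) (x i) r hpos0, hGA]
  have hlap : lap (fun y => (C*(T+t)^α*(1 - (‖y‖^2+E)/(2*E)*(T+t)^(-β)/a)^q)^m) x
      = ∑ i : Fin N, (κ*r*Gx^(r-1)*(-2*B2) + κ*r*(r-1)*Gx^(r-2)*(4*B2^2*(x i)^2)) := by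
    unfold lap
    exact Finset.sum_congr rfl fun i _ => hd2i i
  have hsumge : (N:ℝ)*(κ*r*Gx^(r-1)*(-2*B2))
      ≤ ∑ i : Fin N, (κ*r*Gx^(r-1)*(-2*B2) + κ*r*(r-1)*Gx^(r-2)*(4*B2^2*(x i)^2)) := by
    rw [Finset.sum_add_distrib, Finset.sum_const, Finset.card_univ, Fintype.card_fin, nsmul_eq_mul]
    have h2 : 0 ≤ ∑ i : Fin N, κ*r*(r-1)*Gx^(r-2)*(4*B2^2*(x i)^2) := by
      refine Finset.sum_nonneg fun i _ => ?_
      have h3 : (0:ℝ) ≤ Gx^(r-2) := (Real.rpow_pos_of_pos hGpos _).le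
      have h4 : (0:ℝ) ≤ κ*r*(r-1) := mul_nonneg (mul_nonneg hκ.le hr0.le) (by linarith)
      exact mul_nonneg (mul_nonneg h4 h3) (by positivity)
    linarith
  have hρinv : 0 < (ρ x)⁻¹ := inv_pos.mpr (hρpos x)
  have hρle : (ρ x)⁻¹ ≤ ρ2 := (hin x hx.le).2
  have hB2le : B2 ≤ (T+t)^(-β)/(2*a) := by
    rw [hB2def]
    have h2a : (0:ℝ) < 2*a := by linarith
    have h2Ea : 2*a ≤ 2*E*a := by
      calc 2*a = 2*1*a := by ring
      _ ≤ 2*E*a := by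
          apply mul_le_mul_of_nonneg_right _ ha.le
          linarith
    rw [div_le_div_iff₀ (mul_pos (mul_pos two_pos hE0) ha) h2a]
    exact mul_le_mul_of_nonneg_left h2Ea hsbpos.le
  have hPc : (0:ℝ) ≤ 2*(N:ℝ)*κ*r :=
    mul_nonneg (mul_nonneg (mul_nonneg two_pos.le hN0.le) hκ.le) hr0.le
  have hstep : (ρ x)⁻¹*((N:ℝ)*(2*B2*κ*r*Gx^(r-1))) ≤ 2*ρ2*(N:ℝ)*r*C^m*(T+t)^(α*m-β)/a := by
    have hA' : (ρ x)⁻¹*((N:ℝ)*(2*B2*κ*r*Gx^(r-1))) = (ρ x)⁻¹*B2*Gx^(r-1)*(2*(N:ℝ)*κ*r) := by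
      ring
    have hB' : 2*ρ2*(N:ℝ)*r*C^m*(T+t)^(α*m-β)/a = ρ2*((T+t)^(-β)/(2*a))*2*(2*(N:ℝ)*κ*r) := by
      rw [hκdef, show α*m-β = α*m + -β by ring, Real.rpow_add hs]
      field_simp
    rw [hA', hB']
    exact mul3_le _ _ _ _ _ _ _ hPc hρle hB2le hGr1 hB2.le
      (Real.rpow_pos_of_pos hGpos _).le hρ2.le (div_nonneg hsbpos.le (by linarith : (0:ℝ) ≤ 2*a))
  have hlapbound : -((ρ x)⁻¹ * (∑ i : Fin N,
      (κ*r*Gx^(r-1)*(-2*B2) + κ*r*(r-1)*Gx^(r-2)*(4*B2^2*(x i)^2))))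
      ≤ 2*ρ2*(N:ℝ)*r*C^m*(T+t)^(α*m-β)/a := by
    have h1 : -(∑ i : Fin N, (κ*r*Gx^(r-1)*(-2*B2) + κ*r*(r-1)*Gx^(r-2)*(4*B2^2*(x i)^2)))
        ≤ (N:ℝ)*(2*B2*κ*r*Gx^(r-1)) := by
      have he : (N:ℝ)*(κ*r*Gx^(r-1)*(-2*B2)) = -((N:ℝ)*(2*B2*κ*r*Gx^(r-1))) := by ring
      linarith [hsumge]
    calc -((ρ x)⁻¹ * (∑ i : Fin N,
          (κ*r*Gx^(r-1)*(-2*B2) + κ*r*(r-1)*Gx^(r-2)*(4*B2^2*(x i)^2))))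
        = (ρ x)⁻¹ * (-(∑ i : Fin N,
          (κ*r*Gx^(r-1)*(-2*B2) + κ*r*(r-1)*Gx^(r-2)*(4*B2^2*(x i)^2)))) := by ring
      _ ≤ (ρ x)⁻¹*((N:ℝ)*(2*B2*κ*r*Gx^(r-1))) := mul_le_mul_of_nonneg_left h1 hρinv.le
      _ ≤ _ := hstep
  -- v^p lower bound
  have hvp : W0*(C^p*(T+t)^(α*p)) ≤ (C*(T+t)^α*Gx^q)^p := by
    have h1 : (C*(T+t)^α*Gx^q)^p = C^p*(T+t)^(α*p)*Gx^(q*p) := by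
      rw [Real.mul_rpow (mul_nonneg hC.le (Real.rpow_nonneg hs.le α)) (Real.rpow_nonneg hGpos.le q),
          Real.mul_rpow hC.le (Real.rpow_nonneg hs.le α),
          ← Real.rpow_mul hs.le, ← Real.rpow_mul hGpos.le]
    rw [h1]
    have h2 : W0 ≤ Gx^(q*p) := by
      rw [hW0def]
      exact Real.rpow_le_rpow (by norm_num) hGl.le (mul_nonneg hq.le (by linarith))
    calc W0*(C^p*(T+t)^(α*p)) ≤ Gx^(q*p)*(C^p*(T+t)^(α*p)) :=
          mul_le_mul_of_nonneg_right h2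
            (mul_nonneg (Real.rpow_pos_of_pos hC _).le (Real.rpow_pos_of_pos hs _).le)
    _ = C^p*(T+t)^(α*p)*Gx^(q*p) := by ring
  have hW2C : (0:ℝ) ≤ (W0/2)*C^p := mul_nonneg (by linarith) (Real.rpow_pos_of_pos hC _).le
  have hX1 : C*(α+q*β)*(T+t)^(α-1) ≤ W0/2*C^p*(T+t)^(α*p) := by
    have h1 : s₀^(α*(p-1)+1) ≤ (T+t)^(α*(p-1)+1) := Real.rpow_le_rpow hs₀.le hss₀.le hδ1pos
    have h2 : C*(α+q*β) ≤ W0/2*C^p*(T+t)^(α*(p-1)+1) := by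
      calc C*(α+q*β) ≤ W0/2*C^p*s₀^(α*(p-1)+1) := hFA
      _ ≤ W0/2*C^p*(T+t)^(α*(p-1)+1) := by
          rw [mul_assoc, mul_assoc]
          exact mul_le_mul_of_nonneg_left
            (mul_le_mul_of_nonneg_left h1 (Real.rpow_pos_of_pos hC _).le) (by linarith)
    have hmerge : (T+t)^(α*(p-1)+1)*(T+t)^(α-1) = (T+t)^(α*p) := by
      rw [← Real.rpow_add hs]; congr 1; ring
    calc C*(α+q*β)*(T+t)^(α-1) ≤ (W0/2*C^p*(T+t)^(α*(p-1)+1))*(T+t)^(α-1) :=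
          mul_le_mul_of_nonneg_right h2 hsα1
    _ = W0/2*C^p*((T+t)^(α*(p-1)+1)*(T+t)^(α-1)) := by ring
    _ = W0/2*C^p*(T+t)^(α*p) := by rw [hmerge]
  have hX2 : 2*ρ2*(N:ℝ)*r*C^m*(T+t)^(α*m-β)/a ≤ W0/2*C^p*(T+t)^(α*p) := by
    have h1 : s₀^(α*p-(α*m-β)) ≤ (T+t)^(α*p-(α*m-β)) := Real.rpow_le_rpow hs₀.le hss₀.le hδ2.le
    have h2 : 2*ρ2*(N:ℝ)*r*C^m/a ≤ W0/2*C^p*(T+t)^(α*p-(α*m-β)) := by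
      calc 2*ρ2*(N:ℝ)*r*C^m/a ≤ W0/2*C^p*s₀^(α*p-(α*m-β)) := hFB
      _ ≤ W0/2*C^p*(T+t)^(α*p-(α*m-β)) := by
          rw [mul_assoc, mul_assoc]
          exact mul_le_mul_of_nonneg_left
            (mul_le_mul_of_nonneg_left h1 (Real.rpow_pos_of_pos hC _).le) (by linarith)
    have hmerge : (T+t)^(α*p-(α*m-β))*(T+t)^(α*m-β) = (T+t)^(α*p) := by
      rw [← Real.rpow_add hs]; congr 1; ring
    calc 2*ρ2*(N:ℝ)*r*C^m*(T+t)^(α*m-β)/a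
        = (2*ρ2*(N:ℝ)*r*C^m/a)*(T+t)^(α*m-β) := by ring
    _ ≤ (W0/2*C^p*(T+t)^(α*p-(α*m-β)))*(T+t)^(α*m-β) :=
        mul_le_mul_of_nonneg_right h2 (Real.rpow_pos_of_pos hs _).le
    _ = W0/2*C^p*((T+t)^(α*p-(α*m-β))*(T+t)^(α*m-β)) := by ring
    _ = W0/2*C^p*(T+t)^(α*p) := by rw [hmerge]
  rw [hDt, hlap]
  have hfin : W0*(C^p*(T+t)^(α*p)) = W0/2*C^p*(T+t)^(α*p) + W0/2*C^p*(T+t)^(α*p) := by ring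
  linarith [hterm1, hterm2, hlapbound, hvp, hX1, hX2]
end
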